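/- arXiv:1611.10056 — 6 statements merged into one kernel-verified Lean document; each statement's English description precedes it below -/
import Mathlib

section
/- Fix real numbers ℓ ≥ 1, b > 0 and x₀ > 0, set R = b·exp(−1/x₀^ℓ), and let f₀(x) = b·exp(−1/|x|^ℓ) for real x ≠ 0. Then there exist an open set U ⊆ D_*((−x₀,0)) ∪ D_*((0,x₀)) with (−x₀,0) ∪ (0,x₀) ⊆ U and a holomorphic map F₀ : U → ℂ such that F₀ agrees with f₀ on (−x₀,0) ∪ (0,x₀) and F₀ is an (unbranched) covering map from U onto B*(0,R). In particular diam(U) = 2x₀. -/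
open Complex Set Metric
open scoped Real

noncomputable section

namespace Stmt10Aux

/-- The sector inequality `cos (ℓθ) ≤ (cos θ)^ℓ` for `|θ| < π/(2ℓ)`, `ℓ ≥ 1`. -/
lemma cos_rpow_ineq {ℓ θ : ℝ} (hℓ : 1 ≤ ℓ) (hθ : |θ| < π / (2 * ℓ)) :
    Real.cos (ℓ * θ) ≤ Real.cos θ ^ ℓ := by
  have hℓ0 : (0:ℝ) < ℓ := lt_of_lt_of_le one_pos hℓ
  have hπ := Real.pi_pos
  set T := π / (2 * ℓ) with hT
  have hT0 : 0 < T := by positivity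
  have hTle : T ≤ π / 2 := by
    rw [hT, div_le_div_iff₀ (by positivity) (by positivity)]
    nlinarith
  -- reduce to the absolute value
  have key : ∀ t ∈ Icc (0:ℝ) T, t < T → Real.cos (ℓ * t) ≤ Real.cos t ^ ℓ := by
    intro t ht htlt
    set g : ℝ → ℝ := fun s => Real.cos s ^ ℓ - Real.cos (ℓ * s) with hg
    have hcont : ContinuousOn g (Icc 0 T) := by
      apply Continuous.continuousOn
      exact (Real.continuous_cos.rpow_const fun x => Or.inr (by linarith)).sub
        (Real.continuous_cos.comp (continuous_const.mul continuous_id))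
    have hderiv : ∀ s ∈ Ioo (0:ℝ) T,
        HasDerivAt g (ℓ * Real.cos s ^ (ℓ - 1) * (-Real.sin s) - -Real.sin (ℓ * s) * ℓ) s := by
      intro s hs
      have hcos : 0 < Real.cos s := by
        apply Real.cos_pos_of_mem_Ioo
        constructor
        · linarith [hs.1]
        · exact lt_of_lt_of_le hs.2 hTle
      have h1 : HasDerivAt (fun u => Real.cos u ^ ℓ) (ℓ * Real.cos s ^ (ℓ - 1) * (-Real.sin s)) s :=
        (Real.hasDerivAt_rpow_const (Or.inl hcos.ne')).comp s (Real.hasDerivAt_cos s)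
      have h2 : HasDerivAt (fun u => Real.cos (ℓ * u)) (-Real.sin (ℓ * s) * ℓ) s := by
        have := (Real.hasDerivAt_cos (ℓ * s)).comp s ((hasDerivAt_id s).const_mul ℓ)
        exact this.congr_deriv (by ring)
      exact h1.sub h2
    have hmono : MonotoneOn g (Icc 0 T) := by
      apply monotoneOn_of_deriv_nonneg (convex_Icc 0 T) hcont
      · intro s hs
        rw [interior_Icc] at hs
        exact ((hderiv s hs).differentiableAt).differentiableWithinAt
      · intro s hs
        rw [interior_Icc] at hs
        rw [(hderiv s hs).deriv]
        have hs1 : 0 ≤ Real.sin s := Real.sin_nonneg_of_nonneg_of_le_pi hs.1.le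
          (by linarith [hs.2, hTle])
        have hcos : 0 < Real.cos s := Real.cos_pos_of_mem_Ioo
          ⟨by linarith [hs.1], lt_of_lt_of_le hs.2 hTle⟩
        have hc1 : Real.cos s ^ (ℓ - 1) ≤ 1 :=
          Real.rpow_le_one hcos.le (Real.cos_le_one s) (by linarith)
        have hsin2 : Real.sin s ≤ Real.sin (ℓ * s) := by
          have hls : ℓ * s ≤ π / 2 := by
            have h2 := hs.2
            rw [hT, lt_div_iff₀ (by positivity)] at h2
            nlinarith
          apply Real.strictMonoOn_sin.monotoneOn
          · constructor <;> [linarith [hs.1]; linarith [hs.2, hTle]]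
          · constructor <;> [nlinarith [hs.1]; exact hls]
          · nlinarith [hs.1]
        have hpos : Real.cos s ^ (ℓ - 1) * Real.sin s ≤ Real.sin (ℓ * s) := by
          calc Real.cos s ^ (ℓ - 1) * Real.sin s ≤ 1 * Real.sin s := by
                exact mul_le_mul_of_nonneg_right hc1 hs1
            _ = Real.sin s := one_mul _
            _ ≤ Real.sin (ℓ * s) := hsin2
        nlinarith [hpos]
    have h0 : g 0 = 0 := by
      simp [hg, Real.cos_zero, Real.one_rpow]
    have := hmono (left_mem_Icc.mpr hT0.le) ht ht.1
    rw [h0] at this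
    simpa [hg, sub_nonneg] using this
  have habs : |θ| ∈ Icc (0:ℝ) T := ⟨abs_nonneg θ, hθ.le⟩
  have := key |θ| habs hθ
  rw [Real.cos_abs] at this
  rwa [show ℓ * |θ| = |ℓ * θ| by rw [abs_mul, abs_of_pos hℓ0], Real.cos_abs] at this

/-! ### The sets and the map -/

def Up (ℓ c : ℝ) : Set ℂ :=
  {z | 0 < z.re ∧ |z.arg| < π / (2 * ℓ) ∧ c < (z ^ (-(ℓ:ℂ))).re}

def UU (ℓ c : ℝ) : Set ℂ := Up ℓ c ∪ (fun z => -z) ⁻¹' Up ℓ c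

def FF (ℓ b : ℝ) (z : ℂ) : ℂ := (b : ℂ) * Complex.exp (-((z ^ 2) ^ (-(ℓ:ℂ) / 2)))

variable {ℓ b c x₀ : ℝ} {z w : ℂ}

lemma Up_ne_zero (hz : z ∈ Up ℓ c) : z ≠ 0 := by
  intro h; rw [h] at hz; simpa using hz.1

lemma Up_slit (hz : z ∈ Up ℓ c) : z ∈ slitPlane := Or.inl hz.1

lemma arg_bound (hℓ : 1 ≤ ℓ) (hz : z ∈ Up ℓ c) : ℓ * |z.arg| < π / 2 := by
  have hℓ0 : (0:ℝ) < ℓ := lt_of_lt_of_le one_pos hℓ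
  have h := hz.2.1
  rw [lt_div_iff₀ (by positivity)] at h
  nlinarith

lemma log_psi (hℓ : 1 ≤ ℓ) (hz : z ∈ Up ℓ c) :
    Complex.log (z ^ (-(ℓ:ℂ))) = -(ℓ:ℂ) * Complex.log z := by
  have hℓ0 : (0:ℝ) < ℓ := lt_of_lt_of_le one_pos hℓ
  have hπ := Real.pi_pos
  have hz0 := Up_ne_zero hz
  have harg := arg_bound hℓ hz
  have hb : |ℓ * z.arg| < π / 2 := by rwa [abs_mul, abs_of_pos hℓ0]
  have habs := abs_lt.1 hb
  rw [Complex.cpow_def_of_ne_zero hz0]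
  have him : (Complex.log z * -(ℓ:ℂ)).im = -(ℓ * z.arg) := by
    simp [Complex.mul_im, Complex.log_im]
    ring
  rw [Complex.log_exp (by rw [him]; linarith [habs.1, habs.2]) (by rw [him]; linarith [habs.1, habs.2])]
  ring

lemma psi_ne_zero (hz : z ≠ 0) : z ^ (-(ℓ:ℂ)) ≠ 0 := by
  rw [Complex.cpow_def_of_ne_zero hz]; exact Complex.exp_ne_zero _

lemma psi_inv (hℓ : 1 ≤ ℓ) (hz : z ∈ Up ℓ c) :
    (z ^ (-(ℓ:ℂ))) ^ (-(1:ℂ)/ℓ) = z := by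
  have hℓ0 : (0:ℝ) < ℓ := lt_of_lt_of_le one_pos hℓ
  have hℓc : (ℓ:ℂ) ≠ 0 := by exact_mod_cast hℓ0.ne'
  have hz0 := Up_ne_zero hz
  rw [Complex.cpow_def_of_ne_zero (psi_ne_zero hz0), log_psi hℓ hz,
    show -(ℓ:ℂ) * Complex.log z * (-(1:ℂ)/ℓ) = Complex.log z by field_simp]
  exact Complex.exp_log hz0

lemma inv_mem_Up (hℓ : 1 ≤ ℓ) (hc : 0 < c) (hw : c < w.re) :
    w ^ (-(1:ℂ)/ℓ) ∈ Up ℓ c ∧ (w ^ (-(1:ℂ)/ℓ)) ^ (-(ℓ:ℂ)) = w := by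
  have hℓ0 : (0:ℝ) < ℓ := lt_of_lt_of_le one_pos hℓ
  have hℓc : (ℓ:ℂ) ≠ 0 := by exact_mod_cast hℓ0.ne'
  have hπ := Real.pi_pos
  have hwre : 0 < w.re := lt_trans hc hw
  have hw0 : w ≠ 0 := by intro h; rw [h] at hwre; simp at hwre
  have harg : |w.arg| < π / 2 := Complex.abs_arg_lt_pi_div_two_iff.2 (Or.inl hwre)
  set v := w ^ (-(1:ℂ)/ℓ) with hv
  have hvexp : v = Complex.exp (Complex.log w * (-(1:ℂ)/ℓ)) :=
    Complex.cpow_def_of_ne_zero hw0 _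
  have him : (Complex.log w * (-(1:ℂ)/ℓ)).im = -(w.arg / ℓ) := by
    have : (-(1:ℂ)/ℓ) = ((-(1/ℓ) : ℝ) : ℂ) := by push_cast; ring
    rw [this]
    simp [Complex.mul_im, Complex.log_im]
    ring
  have himb : |(Complex.log w * (-(1:ℂ)/ℓ)).im| < π / 2 := by
    rw [him, abs_neg, abs_div, abs_of_pos hℓ0]
    calc |w.arg| / ℓ ≤ |w.arg| / 1 := by
          apply div_le_div_of_nonneg_left (abs_nonneg _) one_pos hℓ
      _ < π / 2 := by rwa [div_one]
  have himb' := abs_lt.1 himb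
  have hlogv : Complex.log v = Complex.log w * (-(1:ℂ)/ℓ) := by
    rw [hvexp, Complex.log_exp (by linarith) (by linarith)]
  have hargv : v.arg = -(w.arg / ℓ) := by
    rw [← Complex.log_im, hlogv, him]
  have hv0 : v ≠ 0 := by rw [hvexp]; exact Complex.exp_ne_zero _
  have hargv2 : |v.arg| < π / (2 * ℓ) := by
    rw [hargv, abs_neg, abs_div, abs_of_pos hℓ0, div_lt_div_iff₀ hℓ0 (by positivity)]
    nlinarith
  have hvre : 0 < v.re := by
    have h2 : |v.arg| < π / 2 := by
      apply lt_of_lt_of_le hargv2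
      rw [div_le_div_iff₀ (by positivity) (by positivity)]
      nlinarith
    rcases Complex.abs_arg_lt_pi_div_two_iff.1 h2 with h | h
    · exact h
    · exact absurd h hv0
  have hpsiv : v ^ (-(ℓ:ℂ)) = w := by
    rw [Complex.cpow_def_of_ne_zero hv0, hlogv,
      show Complex.log w * (-(1:ℂ)/ℓ) * -(ℓ:ℂ) = Complex.log w by field_simp]
    exact Complex.exp_log hw0
  refine ⟨⟨hvre, hargv2, ?_⟩, hpsiv⟩
  rw [hpsiv]; exact hw

lemma FF_eq (hz : 0 < z.re) : FF ℓ b z = (b:ℂ) * Complex.exp (-(z ^ (-(ℓ:ℂ)))) := by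
  have hπ := Real.pi_pos
  have hz0 : z ≠ 0 := by intro h; rw [h] at hz; simp at hz
  have hz2 : z ^ 2 ≠ 0 := pow_ne_zero 2 hz0
  have harg : |z.arg| < π / 2 := Complex.abs_arg_lt_pi_div_two_iff.2 (Or.inl hz)
  have harg' := abs_lt.1 harg
  have hlog2 : Complex.log (z ^ 2) = 2 * Complex.log z := by
    rw [sq]
    rw [(Complex.log_mul_eq_add_log_iff hz0 hz0).2 (by constructor <;> [linarith; linarith])]
    ring
  rw [FF, Complex.cpow_def_of_ne_zero hz2, hlog2,
    show (2:ℂ) * Complex.log z * (-(ℓ:ℂ)/2) = Complex.log z * -(ℓ:ℂ) by ring,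
    ← Complex.cpow_def_of_ne_zero hz0]

lemma FF_neg : FF ℓ b (-z) = FF ℓ b z := by rw [FF, FF, neg_pow_two]

lemma FF_ne_zero (hb : 0 < b) : FF ℓ b z ≠ 0 :=
  mul_ne_zero (by exact_mod_cast hb.ne') (Complex.exp_ne_zero _)

lemma abs_FF (hb : 0 < b) (hz : 0 < z.re) :
    ‖FF ℓ b z‖ = b * Real.exp (-(z ^ (-(ℓ:ℂ))).re) := by
  rw [FF_eq hz, norm_mul, Complex.norm_exp, Complex.norm_real, Real.norm_eq_abs, abs_of_pos hb,
    Complex.neg_re]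

lemma FF_mapsTo (hℓ : 1 ≤ ℓ) (hb : 0 < b) :
    MapsTo (FF ℓ b) (UU ℓ c) (ball (0:ℂ) (b * Real.exp (-c)) \ {0}) := by
  intro z hz
  have key : ∀ v, v ∈ Up ℓ c → FF ℓ b v ∈ ball (0:ℂ) (b * Real.exp (-c)) \ {0} := by
    intro v hv
    constructor
    · rw [mem_ball_zero_iff, abs_FF hb hv.1]
      exact mul_lt_mul_of_pos_left (Real.exp_lt_exp.2 (by linarith [hv.2.2])) hb
    · simpa using FF_ne_zero hb
  rcases hz with hz | hz
  · exact key z hz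
  · rw [← FF_neg]; exact key _ hz

lemma real_mem_Up (hℓ : 1 ≤ ℓ) (hx₀ : 0 < x₀) {x : ℝ} (hx : x ∈ Ioo 0 x₀) :
    (x:ℂ) ∈ Up ℓ (x₀ ^ (-ℓ)) := by
  have hℓ0 : (0:ℝ) < ℓ := lt_of_lt_of_le one_pos hℓ
  have hπ := Real.pi_pos
  refine ⟨by simpa using hx.1, ?_, ?_⟩
  · rw [Complex.arg_ofReal_of_nonneg hx.1.le]
    simpa using by positivity
  · have hcast : ((x:ℂ)) ^ (-(ℓ:ℂ)) = ((x ^ (-ℓ) : ℝ) : ℂ) := by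
      rw [show (-(ℓ:ℂ)) = ((-ℓ : ℝ) : ℂ) by push_cast; ring, ← Complex.ofReal_cpow hx.1.le]
    rw [hcast, Complex.ofReal_re]
    rw [Real.rpow_neg hx.1.le, Real.rpow_neg hx₀.le]
    apply inv_strictAnti₀ (Real.rpow_pos_of_pos hx.1 ℓ)
    exact Real.rpow_lt_rpow hx.1.le hx.2 hℓ0

lemma psi_re_eq (hℓ : 1 ≤ ℓ) (hz0 : z ≠ 0) :
    (z ^ (-(ℓ:ℂ))).re = (‖z‖) ^ (-ℓ) * Real.cos (ℓ * z.arg) := by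
  have hr : 0 < ‖z‖ := norm_pos_iff.mpr hz0
  rw [Complex.cpow_def_of_ne_zero hz0, Complex.exp_re]
  have h1 : (Complex.log z * -(ℓ:ℂ)).re = Real.log (‖z‖) * (-ℓ) := by
    simp [Complex.mul_re, Complex.log_re]
  have h2 : (Complex.log z * -(ℓ:ℂ)).im = z.arg * (-ℓ) := by
    simp [Complex.mul_im, Complex.log_im]
  rw [h1, h2, Real.rpow_def_of_pos hr]
  rw [show z.arg * -ℓ = -(ℓ * z.arg) by ring, Real.cos_neg]

lemma Up_subset_ball (hℓ : 1 ≤ ℓ) (hx₀ : 0 < x₀) :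
    Up ℓ (x₀ ^ (-ℓ)) ⊆ ball (((x₀ / 2 : ℝ)) : ℂ) (x₀ / 2) := by
  intro z hz
  have hℓ0 : (0:ℝ) < ℓ := lt_of_lt_of_le one_pos hℓ
  have hz0 := Up_ne_zero hz
  set r := ‖z‖ with hr
  have hr0 : 0 < r := norm_pos_iff.mpr hz0
  have hcos : Real.cos z.arg = z.re / r := Complex.cos_arg hz0
  have hcpos : 0 < Real.cos z.arg := by
    rcases Complex.abs_arg_lt_pi_div_two_iff.2 (Or.inl hz.1) with h
    exact Real.cos_pos_of_mem_Ioo ⟨(abs_lt.1 h).1, (abs_lt.1 h).2⟩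
  -- key: r < x₀ * cos θ
  have hkey : r < x₀ * Real.cos z.arg := by
    have h1 : x₀ ^ (-ℓ) < r ^ (-ℓ) * Real.cos (ℓ * z.arg) := by
      rw [← psi_re_eq hℓ hz0]; exact hz.2.2
    have h2 : Real.cos (ℓ * z.arg) ≤ Real.cos z.arg ^ ℓ := cos_rpow_ineq hℓ hz.2.1
    have h3 : x₀ ^ (-ℓ) < r ^ (-ℓ) * Real.cos z.arg ^ ℓ := by
      apply lt_of_lt_of_le h1
      exact mul_le_mul_of_nonneg_left h2 (Real.rpow_pos_of_pos hr0 _).le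
    rw [Real.rpow_neg hx₀.le, Real.rpow_neg hr0.le] at h3
    have hrl : (0:ℝ) < r ^ ℓ := Real.rpow_pos_of_pos hr0 _
    have hxl : (0:ℝ) < x₀ ^ ℓ := Real.rpow_pos_of_pos hx₀ _
    have h4 : r ^ ℓ < x₀ ^ ℓ * Real.cos z.arg ^ ℓ := by
      have h5 := mul_lt_mul_of_pos_right h3 hrl
      rw [mul_comm ((r ^ ℓ)⁻¹) _, mul_assoc, inv_mul_cancel₀ hrl.ne', mul_one] at h5
      have h6 := mul_lt_mul_of_pos_left h5 hxl
      rwa [← mul_assoc, mul_inv_cancel₀ hxl.ne', one_mul] at h6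
    rw [← Real.mul_rpow hx₀.le hcpos.le] at h4
    exact (Real.rpow_lt_rpow_iff hr0.le (by positivity) hℓ0).1 h4
  have hre : z.re = r * Real.cos z.arg := by
    rw [hcos]; field_simp
  have hr2 : r ^ 2 < x₀ * z.re := by
    rw [hre, ← mul_assoc]
    have := mul_lt_mul_of_pos_right hkey hr0
    nlinarith [hcpos]
  rw [mem_ball, Complex.dist_eq]
  have hsq : ‖z - ((x₀/2 : ℝ):ℂ)‖ ^ 2 = r ^ 2 + (x₀/2)^2 - x₀ * z.re := by
    rw [Complex.sq_norm, Complex.normSq_sub, Complex.normSq_ofReal, Complex.conj_ofReal,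
      ← Complex.sq_norm z]
    have : (z * ((x₀/2 : ℝ):ℂ)).re = z.re * (x₀/2) := by
      simp [Complex.mul_re]
    rw [this]
    ring
  nlinarith [norm_nonneg (z - ((x₀/2 : ℝ):ℂ)), hx₀]

lemma isOpen_Up : IsOpen (Up ℓ c) := by
  rw [isOpen_iff_mem_nhds]
  intro z hz
  have hslit : z ∈ slitPlane := Up_slit hz
  have h1 : ∀ᶠ w : ℂ in nhds z, 0 < w.re :=
    continuousAt_const.eventually_lt Complex.continuous_re.continuousAt hz.1
  have h2 : ∀ᶠ w : ℂ in nhds z, |w.arg| < π / (2 * ℓ) :=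
    ((Complex.continuousAt_arg hslit).abs).eventually_lt continuousAt_const hz.2.1
  have h3 : ∀ᶠ w : ℂ in nhds z, c < (w ^ (-(ℓ:ℂ))).re :=
    continuousAt_const.eventually_lt
      (Complex.continuous_re.continuousAt.comp (continuousAt_cpow_const hslit)) hz.2.2
  filter_upwards [h1, h2, h3] with w hw1 hw2 hw3
  exact ⟨hw1, hw2, hw3⟩

lemma isOpen_UU : IsOpen (UU ℓ c) :=
  isOpen_Up.union (isOpen_Up.preimage continuous_neg)

lemma UU_slit2 (hz : z ∈ UU ℓ c) : z ^ 2 ∈ slitPlane := by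
  have hre : z.re ≠ 0 := by
    rcases hz with hz | hz
    · exact hz.1.ne'
    · have : 0 < (-z).re := hz.1
      rw [Complex.neg_re] at this
      linarith
  rw [Complex.mem_slitPlane_iff, sq, Complex.mul_re, Complex.mul_im]
  by_cases him : z.im = 0
  · left
    rw [him]
    simpa using mul_self_pos.2 hre
  · right
    intro h
    rcases mul_eq_zero.1 (by linarith : z.re * z.im = 0) with h' | h'
    · exact hre h'
    · exact him h'

lemma diff_FF : DifferentiableOn ℂ (FF ℓ b) (UU ℓ c) := by
  intro z hz
  apply DifferentiableAt.differentiableWithinAt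
  have h1 : DifferentiableAt ℂ (fun w : ℂ => (w ^ 2) ^ (-(ℓ:ℂ)/2)) z :=
    DifferentiableAt.cpow (differentiableAt_pow 2) (differentiableAt_const _) (UU_slit2 hz)
  exact (h1.neg.cexp).const_mul _

lemma FF_real {x : ℝ} (hx : x ≠ 0) (hb : 0 < b) :
    FF ℓ b (x:ℂ) = ((b * Real.exp (-1 / |x| ^ ℓ) : ℝ) : ℂ) := by
  have habs : (0:ℝ) < |x| := abs_pos.2 hx
  have h1 : ((x:ℂ)) ^ 2 = (((x ^ 2 : ℝ)) : ℂ) := by push_cast; ring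
  have h2 : (-(ℓ:ℂ)/2) = ((-ℓ/2 : ℝ) : ℂ) := by push_cast; ring
  have h3 : (((x^2:ℝ)):ℂ) ^ ((-ℓ/2 : ℝ) : ℂ) = (((x^2:ℝ) ^ (-ℓ/2 : ℝ) : ℝ) : ℂ) :=
    (Complex.ofReal_cpow (sq_nonneg x) _).symm
  have h4 : (x^2:ℝ) ^ (-ℓ/2 : ℝ) = |x| ^ (-ℓ) := by
    rw [← _root_.sq_abs x, ← Real.rpow_natCast |x| 2, ← Real.rpow_mul (abs_nonneg x)]
    norm_num
    ring_nf
  have h5 : -1 / |x| ^ ℓ = -(|x| ^ (-ℓ)) := by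
    rw [Real.rpow_neg (abs_nonneg x)]
    ring
  rw [FF, h1, h2, h3, h4, h5]
  push_cast [Complex.ofReal_exp]
  ring

lemma surjOn_FF (hℓ : 1 ≤ ℓ) (hb : 0 < b) (hc : 0 < c) :
    SurjOn (FF ℓ b) (UU ℓ c) (ball (0:ℂ) (b * Real.exp (-c)) \ {0}) := by
  intro y hy
  have hb0 : (b:ℂ) ≠ 0 := by exact_mod_cast hb.ne'
  have hy0 : y ≠ 0 := by simpa using hy.2
  have hyR : ‖y‖ < b * Real.exp (-c) := by
    have := hy.1; rwa [mem_ball_zero_iff] at this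
  have hya : (0:ℝ) < ‖y‖ := norm_pos_iff.mpr hy0
  set w := -Complex.log (y / (b:ℂ)) with hw
  have hwre : c < w.re := by
    have h1 : w.re = Real.log b - Real.log (‖y‖) := by
      rw [hw, Complex.neg_re, Complex.log_re, norm_div, Complex.norm_real, Real.norm_eq_abs,
        abs_of_pos hb,
        Real.log_div hya.ne' hb.ne']
      ring
    have h2 : Real.log (‖y‖) < Real.log (b * Real.exp (-c)) :=
      Real.log_lt_log hya hyR
    rw [Real.log_mul hb.ne' (Real.exp_ne_zero _), Real.log_exp] at h2
    linarith [h1, h2]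
  obtain ⟨hv, hpsi⟩ := inv_mem_Up hℓ hc hwre
  refine ⟨w ^ (-(1:ℂ)/ℓ), Or.inl hv, ?_⟩
  rw [FF_eq hv.1, hpsi, hw, neg_neg, Complex.exp_log (div_ne_zero hy0 hb0)]
  field_simp

/-! ### Covering structure helpers -/

def sigmaf (z : ℂ) : ℂ := if 0 < z.re then z else -z

def Wfn (y0 w0 t : ℂ) (n : ℤ) : ℂ :=
  w0 - Complex.log (t / y0) + (n : ℂ) * (2 * (π:ℝ) * I)

def nfn (ℓ b : ℝ) (y0 w0 z : ℂ) : ℤ :=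
  round (((sigmaf z ^ (-(ℓ:ℂ)) - w0 + Complex.log (FF ℓ b z / y0)).im) / (2 * π))

def ifn (ℓ : ℝ) (y0 w0 : ℂ) (q : ℂ × Bool × ℤ) : ℂ :=
  (cond q.2.1 1 (-1)) * (Wfn y0 w0 q.1 q.2.2) ^ (-(1:ℂ)/ℓ)

lemma intmul_im (n : ℤ) : ((n:ℂ) * (2 * (π:ℝ) * I)).im = n * (2 * π) := by
  simp [Complex.mul_im]

lemma intmul_re (n : ℤ) : ((n:ℂ) * (2 * (π:ℝ) * I)).re = 0 := by
  simp [Complex.mul_re]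

lemma sigma_mem (hz : z ∈ UU ℓ c) :
    sigmaf z ∈ Up ℓ c ∧ FF ℓ b z = FF ℓ b (sigmaf z) := by
  rcases hz with hz | hz
  · rw [sigmaf, if_pos hz.1]; exact ⟨hz, rfl⟩
  · have hz' : -z ∈ Up ℓ c := hz
    have hre : z.re < 0 := by
      have := hz'.1; rw [Complex.neg_re] at this; linarith
    rw [sigmaf, if_neg (by linarith)]
    exact ⟨hz', (FF_neg).symm⟩

lemma Wre_eq {y0 t : ℂ} (hb : 0 < b) (hy0 : y0 ≠ 0) (ht : t ≠ 0) (n : ℤ) :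
    (Wfn y0 (-Complex.log (y0 / b)) t n).re = Real.log b - Real.log (‖t‖) := by
  have hya : (0:ℝ) < ‖y0‖ := norm_pos_iff.mpr hy0
  have hta : (0:ℝ) < ‖t‖ := norm_pos_iff.mpr ht
  rw [Wfn, Complex.add_re, Complex.sub_re, Complex.neg_re, Complex.log_re, Complex.log_re,
    intmul_re, norm_div, norm_div, Complex.norm_real, Real.norm_eq_abs, abs_of_pos hb,
    Real.log_div hya.ne' hb.ne', Real.log_div hta.ne' hya.ne']
  ring

lemma expW {y0 t : ℂ} (hb : 0 < b) (hy0 : y0 ≠ 0) (ht : t ≠ 0) (n : ℤ) :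
    (b:ℂ) * Complex.exp (-(Wfn y0 (-Complex.log (y0 / b)) t n)) = t := by
  have hb0 : (b:ℂ) ≠ 0 := by exact_mod_cast hb.ne'
  have h1 : -(Wfn y0 (-Complex.log (y0 / b)) t n)
      = Complex.log (y0 / b) + Complex.log (t / y0) + ((-n : ℤ):ℂ) * (2 * (π:ℝ) * I) := by
    rw [Wfn]; push_cast; ring
  rw [h1, Complex.exp_add, Complex.exp_add, Complex.exp_log (div_ne_zero hy0 hb0),
    Complex.exp_log (div_ne_zero ht hy0), Complex.exp_int_mul_two_pi_mul_I]
  field_simp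

lemma keyX_lemma (hℓ : 1 ≤ ℓ) (hb : 0 < b) {y0 : ℂ} (hy0 : y0 ≠ 0) {z : ℂ} (hz : z ∈ UU ℓ c) :
    sigmaf z ^ (-(ℓ:ℂ)) - (-Complex.log (y0 / b)) + Complex.log (FF ℓ b z / y0)
      = ((nfn ℓ b y0 (-Complex.log (y0 / b)) z : ℂ)) * (2 * (π:ℝ) * I) := by
  have hπ := Real.pi_pos
  have hb0 : (b:ℂ) ≠ 0 := by exact_mod_cast hb.ne'
  obtain ⟨hσ1, hσ2⟩ := sigma_mem (b := b) hz
  have hFz : FF ℓ b z = (b:ℂ) * Complex.exp (-(sigmaf z ^ (-(ℓ:ℂ)))) := by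
    rw [hσ2, FF_eq hσ1.1]
  have hFne : FF ℓ b z / y0 ≠ 0 := div_ne_zero (FF_ne_zero hb) hy0
  obtain ⟨n, hn⟩ : ∃ n : ℤ, sigmaf z ^ (-(ℓ:ℂ)) - (-Complex.log (y0 / b))
      + Complex.log (FF ℓ b z / y0) = (n:ℂ) * (2 * (π:ℝ) * I) := by
    rw [← Complex.exp_eq_one_iff, Complex.exp_add, Complex.exp_sub, Complex.exp_log hFne,
      hFz, Complex.exp_neg (Complex.log (y0 / b)), Complex.exp_log (div_ne_zero hy0 hb0),
      Complex.exp_neg (sigmaf z ^ (-(ℓ:ℂ)))]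
    field_simp
  have hnf : nfn ℓ b y0 (-Complex.log (y0 / b)) z = n := by
    rw [nfn, hn, intmul_im, mul_div_cancel_right₀ _ (by positivity : (2 * π : ℝ) ≠ 0),
      round_intCast]
  rw [hnf]; exact hn

lemma covering_FF (hℓ : 1 ≤ ℓ) (hb : 0 < b) (hc : 0 < c)
    (hm : MapsTo (FF ℓ b) (UU ℓ c) (ball (0:ℂ) (b * Real.exp (-c)) \ {0})) :
    IsCoveringMap (MapsTo.restrict (FF ℓ b) (UU ℓ c)
      (ball (0:ℂ) (b * Real.exp (-c)) \ {0}) hm) := by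
  classical
  have hℓ0 : (0:ℝ) < ℓ := lt_of_lt_of_le one_pos hℓ
  have hπ := Real.pi_pos
  have hb0 : (b:ℂ) ≠ 0 := by exact_mod_cast hb.ne'
  set R := b * Real.exp (-c) with hR
  set T : Set ℂ := ball (0:ℂ) R \ {0} with hTdef
  set p : UU ℓ c → T := MapsTo.restrict (FF ℓ b) (UU ℓ c) T hm with hpdef
  have hpc : Continuous p :=
    (diff_FF (ℓ := ℓ) (b := b) (c := c)).continuousOn.mapsToRestrict hm
  have hpval : ∀ z : UU ℓ c, ((p z : T) : ℂ) = FF ℓ b (z : ℂ) := fun z => rfl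
  have hT0 : ∀ t : T, (t:ℂ) ≠ 0 := fun t => by have := t.2.2; simpa using this
  have hTR : ∀ t : T, ‖(t:ℂ)‖ < R := fun t => by
    have := t.2.1; rwa [mem_ball_zero_iff] at this
  have hFFc : Continuous fun z : UU ℓ c => FF ℓ b (z:ℂ) :=
    (diff_FF (ℓ := ℓ) (b := b) (c := c)).continuousOn.restrict
  apply IsFiberBundle.isCoveringMap (F := Bool × ℤ)
  intro y
  set y0 : ℂ := (y : ℂ) with hy0def
  have hy0 : y0 ≠ 0 := hT0 y
  set w0 : ℂ := -Complex.log (y0 / b) with hw0def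
  have hWre : ∀ (t : T) (n : ℤ), c < (Wfn y0 w0 (t:ℂ) n).re := by
    intro t n
    rw [hw0def, Wre_eq hb hy0 (hT0 t) n]
    have h2 : Real.log (‖(t:ℂ)‖) < Real.log R :=
      Real.log_lt_log (norm_pos_iff.mpr (hT0 t)) (hTR t)
    rw [hR, Real.log_mul hb.ne' (Real.exp_ne_zero _), Real.log_exp] at h2
    linarith
  have hWslit : ∀ (t : T) (n : ℤ), Wfn y0 w0 (t:ℂ) n ∈ slitPlane :=
    fun t n => Or.inl (lt_trans hc (hWre t n))
  have vW : ∀ (t : T) (n : ℤ), (Wfn y0 w0 (t:ℂ) n) ^ (-(1:ℂ)/ℓ) ∈ Up ℓ c ∧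
      ((Wfn y0 w0 (t:ℂ) n) ^ (-(1:ℂ)/ℓ)) ^ (-(ℓ:ℂ)) = Wfn y0 w0 (t:ℂ) n :=
    fun t n => inv_mem_Up hℓ hc (hWre t n)
  have hiU : ∀ q : T × Bool × ℤ, ifn ℓ y0 w0 ((q.1 : ℂ), q.2) ∈ UU ℓ c := by
    rintro ⟨t, s, n⟩
    have hv := (vW t n).1
    cases s
    · right
      show -(ifn ℓ y0 w0 ((t:ℂ), false, n)) ∈ Up ℓ c
      simpa [ifn] using hv
    · left
      simpa [ifn] using hv
  have hFFi : ∀ q : T × Bool × ℤ, FF ℓ b (ifn ℓ y0 w0 ((q.1:ℂ), q.2)) = (q.1 : ℂ) := by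
    rintro ⟨t, s, n⟩
    obtain ⟨hv1, hv2⟩ := vW t n
    have hstep : FF ℓ b ((Wfn y0 w0 (t:ℂ) n) ^ (-(1:ℂ)/ℓ)) = (t:ℂ) := by
      rw [FF_eq hv1.1, hv2, hw0def]
      exact expW hb hy0 (hT0 t) n
    cases s <;>
      simpa [ifn, neg_one_mul, FF_neg] using hstep
  have keyX : ∀ z : ℂ, z ∈ UU ℓ c →
      sigmaf z ^ (-(ℓ:ℂ)) - w0 + Complex.log (FF ℓ b z / y0)
        = ((nfn ℓ b y0 w0 z : ℂ)) * (2 * (π:ℝ) * I) := by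
    intro z hz
    rw [hw0def]
    exact keyX_lemma hℓ hb hy0 hz
  set base : Set T := {t : T | (t:ℂ) / y0 ∈ slitPlane} with hbase
  have obase : IsOpen base := isOpen_slitPlane.preimage (continuous_subtype_val.div_const y0)
  have h2πI : (2 * (π:ℝ) * I : ℂ) ≠ 0 :=
    mul_ne_zero (mul_ne_zero two_ne_zero (by exact_mod_cast hπ.ne')) Complex.I_ne_zero
  refine ⟨{ baseSet := base,
            open_baseSet := obase,
            toFun := fun z => (p z, (decide (0 < (z:ℂ).re), nfn ℓ b y0 w0 (z:ℂ))),
            invFun := fun q => ⟨ifn ℓ y0 w0 ((q.1:ℂ), q.2), hiU q⟩,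
            source := p ⁻¹' base,
            target := base ×ˢ univ,
            map_source' := fun z hz => ⟨hz, mem_univ _⟩,
            map_target' := fun q hq => by
              show (↑(p ⟨ifn ℓ y0 w0 ((q.1:ℂ), q.2), hiU q⟩) : ℂ) / y0 ∈ slitPlane
              rw [hpval, hFFi q]
              exact hq.1,
            left_inv' := fun z hz => by
              apply Subtype.ext
              obtain ⟨hσ1, -⟩ := sigma_mem (b := b) z.2
              have hW : Wfn y0 w0 (↑(p z) : ℂ) (nfn ℓ b y0 w0 (z:ℂ))
                  = sigmaf (z:ℂ) ^ (-(ℓ:ℂ)) := by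
                rw [Wfn, hpval]
                linear_combination -keyX (z:ℂ) z.2
              have hps : (Wfn y0 w0 (↑(p z) : ℂ) (nfn ℓ b y0 w0 (z:ℂ))) ^ (-(1:ℂ)/ℓ)
                  = sigmaf (z:ℂ) := by
                rw [hW]; exact psi_inv hℓ hσ1
              show ifn ℓ y0 w0 ((↑(p z) : ℂ), (decide (0 < (z:ℂ).re), nfn ℓ b y0 w0 (z:ℂ)))
                  = (z:ℂ)
              rcases lt_or_ge 0 (z:ℂ).re with hre | hre
              · simp only [ifn]
                rw [decide_eq_true hre]
                simp only [cond_true, one_mul]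
                rw [hps, sigmaf, if_pos hre]
              · have hre' : ¬ (0 < (z:ℂ).re) := not_lt.2 hre
                simp only [ifn]
                rw [decide_eq_false hre']
                simp only [cond_false, neg_one_mul]
                rw [hps, sigmaf, if_neg hre', neg_neg],
            right_inv' := by
              rintro ⟨t, s, n⟩ hq
              obtain ⟨hv1, hv2⟩ := vW t n
              have hσi : sigmaf (ifn ℓ y0 w0 ((t:ℂ), s, n))
                  = (Wfn y0 w0 (t:ℂ) n) ^ (-(1:ℂ)/ℓ) := by
                cases s
                · simp only [ifn, cond_false, neg_one_mul, sigmaf]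
                  rw [if_neg (by rw [Complex.neg_re]; simp only [not_lt]; linarith [hv1.1]),
                    neg_neg]
                · simp only [ifn, cond_true, one_mul, sigmaf]
                  rw [if_pos hv1.1]
              have hFF' : FF ℓ b (ifn ℓ y0 w0 ((t:ℂ), s, n)) = (t:ℂ) := hFFi (t, s, n)
              have hkey := keyX (ifn ℓ y0 w0 ((t:ℂ), s, n)) (hiU (t, s, n))
              rw [hσi, hv2, hFF'] at hkey
              have hX2 : ((n:ℂ)) * (2 * (π:ℝ) * I)
                  = ((nfn ℓ b y0 w0 (ifn ℓ y0 w0 ((t:ℂ), s, n)) : ℂ)) * (2 * (π:ℝ) * I) := by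
                rw [← hkey, Wfn]; ring
              have hn : nfn ℓ b y0 w0 (ifn ℓ y0 w0 ((t:ℂ), s, n)) = n := by
                have := mul_right_cancel₀ h2πI hX2
                exact_mod_cast this.symm
              refine Prod.ext ?_ (Prod.ext ?_ ?_)
              · exact Subtype.ext (hFFi (t, s, n))
              · show decide (0 < (ifn ℓ y0 w0 ((t:ℂ), s, n)).re) = s
                cases s
                · apply decide_eq_false
                  have : ifn ℓ y0 w0 ((t:ℂ), false, n)
                      = -((Wfn y0 w0 (t:ℂ) n) ^ (-(1:ℂ)/ℓ)) := by
                    simp [ifn]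
                  rw [this, Complex.neg_re]
                  simp only [not_lt]
                  linarith [hv1.1]
                · apply decide_eq_true
                  have : ifn ℓ y0 w0 ((t:ℂ), true, n)
                      = (Wfn y0 w0 (t:ℂ) n) ^ (-(1:ℂ)/ℓ) := by
                    simp [ifn]
                  rw [this]
                  exact hv1.1
              · exact hn,
            open_source := obase.preimage hpc,
            open_target := obase.prod isOpen_univ,
            continuousOn_toFun := by
              apply ContinuousOn.prodMk hpc.continuousOn
              apply ContinuousOn.prodMk
              · -- Bool component
                intro z hz
                rcases (z.2 : (z:ℂ) ∈ UU ℓ c) with h | h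
                · have hre : 0 < (z:ℂ).re := h.1
                  have hO : {w : UU ℓ c | 0 < (w:ℂ).re} ∈ nhdsWithin z (p ⁻¹' base) :=
                    mem_nhdsWithin_of_mem_nhds
                      (((isOpen_lt continuous_const Complex.continuous_re).preimage
                        continuous_subtype_val).mem_nhds hre)
                  apply ContinuousWithinAt.congr_of_eventuallyEq continuousWithinAt_const ?_ rfl
                  filter_upwards [hO] with w hw
                  simp only [decide_eq_decide]
                  exact iff_of_true hw hre
                · have hre : (z:ℂ).re < 0 := by
                    have := h.1; rw [Complex.neg_re] at this; linarith
                  have hO : {w : UU ℓ c | (w:ℂ).re < 0} ∈ nhdsWithin z (p ⁻¹' base) :=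
                    mem_nhdsWithin_of_mem_nhds
                      (((isOpen_lt Complex.continuous_re continuous_const).preimage
                        continuous_subtype_val).mem_nhds hre)
                  apply ContinuousWithinAt.congr_of_eventuallyEq continuousWithinAt_const ?_ rfl
                  filter_upwards [hO] with w hw
                  simp only [decide_eq_decide]
                  exact iff_of_false (not_lt.2 hw.le) (not_lt.2 hre.le)
              · -- ℤ component
                intro z hz
                have hslitFF : FF ℓ b (z:ℂ) / y0 ∈ slitPlane := hz
                apply ContinuousWithinAt.congr_of_eventuallyEq continuousWithinAt_const ?_ rfl
                have hlogc : ContinuousWithinAt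
                    (fun w : UU ℓ c => Complex.log (FF ℓ b (w:ℂ) / y0)) (p ⁻¹' base) z := by
                  exact (((hFFc.div_const y0).continuousAt).clog hslitFF).continuousWithinAt
                rcases (z.2 : (z:ℂ) ∈ UU ℓ c) with h | h
                · have hre : 0 < (z:ℂ).re := h.1
                  have hqc : ContinuousWithinAt (fun w : UU ℓ c =>
                      (((w:ℂ) ^ (-(ℓ:ℂ)) - w0 + Complex.log (FF ℓ b (w:ℂ) / y0)).im) / (2*π))
                      (p ⁻¹' base) z := by
                    apply ContinuousWithinAt.div_const
                    apply Complex.continuous_im.continuousAt.comp_continuousWithinAt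
                    apply ContinuousWithinAt.add ?_ hlogc
                    apply ContinuousWithinAt.sub ?_ continuousWithinAt_const
                    exact (continuous_subtype_val.continuousAt.cpow
                      continuousAt_const (Or.inl hre)).continuousWithinAt
                  have hhalf := Metric.tendsto_nhds.mp hqc (1/2) (by norm_num)
                  have hO : {w : UU ℓ c | 0 < (w:ℂ).re} ∈ nhdsWithin z (p ⁻¹' base) :=
                    mem_nhdsWithin_of_mem_nhds
                      (((isOpen_lt continuous_const Complex.continuous_re).preimage
                        continuous_subtype_val).mem_nhds hre)
                  have hint : ∀ w : UU ℓ c, 0 < (w:ℂ).re →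
                      ((((w:ℂ)) ^ (-(ℓ:ℂ)) - w0 + Complex.log (FF ℓ b (w:ℂ) / y0)).im) / (2*π)
                        = (nfn ℓ b y0 w0 (w:ℂ) : ℝ) := by
                    intro w hw
                    have hXw := keyX (w:ℂ) w.2
                    rw [sigmaf, if_pos hw] at hXw
                    rw [hXw, intmul_im,
                      mul_div_cancel_right₀ _ (by positivity : (2*π:ℝ) ≠ 0)]
                  filter_upwards [hO, hhalf, self_mem_nhdsWithin] with w hw1 hw2 hw3
                  have e1 := hint w hw1
                  have e2 := hint z hre
                  rw [Real.dist_eq, e1, e2] at hw2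
                  have h3 : |(nfn ℓ b y0 w0 (w:ℂ) - nfn ℓ b y0 w0 (z:ℂ) : ℤ)| < 1 := by
                    have h4 : |(nfn ℓ b y0 w0 (w:ℂ) : ℝ) - (nfn ℓ b y0 w0 (z:ℂ) : ℝ)| < 1 :=
                      lt_trans hw2 (by norm_num)
                    exact_mod_cast h4
                  rw [abs_lt] at h3
                  omega
                · have hre : 0 < (-(z:ℂ)).re := h.1
                  have hqc : ContinuousWithinAt (fun w : UU ℓ c =>
                      (((-(w:ℂ)) ^ (-(ℓ:ℂ)) - w0 + Complex.log (FF ℓ b (w:ℂ) / y0)).im) / (2*π))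
                      (p ⁻¹' base) z := by
                    apply ContinuousWithinAt.div_const
                    apply Complex.continuous_im.continuousAt.comp_continuousWithinAt
                    apply ContinuousWithinAt.add ?_ hlogc
                    apply ContinuousWithinAt.sub ?_ continuousWithinAt_const
                    exact (continuous_subtype_val.neg.continuousAt.cpow
                      continuousAt_const (Or.inl hre)).continuousWithinAt
                  have hhalf := Metric.tendsto_nhds.mp hqc (1/2) (by norm_num)
                  have hre' : (z:ℂ).re < 0 := by
                    rw [Complex.neg_re] at hre; linarith
                  have hO : {w : UU ℓ c | (w:ℂ).re < 0} ∈ nhdsWithin z (p ⁻¹' base) :=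
                    mem_nhdsWithin_of_mem_nhds
                      (((isOpen_lt Complex.continuous_re continuous_const).preimage
                        continuous_subtype_val).mem_nhds hre')
                  have hint : ∀ w : UU ℓ c, (w:ℂ).re < 0 →
                      ((((-(w:ℂ))) ^ (-(ℓ:ℂ)) - w0 + Complex.log (FF ℓ b (w:ℂ) / y0)).im) / (2*π)
                        = (nfn ℓ b y0 w0 (w:ℂ) : ℝ) := by
                    intro w hw
                    have hXw := keyX (w:ℂ) w.2
                    rw [sigmaf, if_neg (not_lt.2 hw.le)] at hXw
                    rw [hXw, intmul_im,
                      mul_div_cancel_right₀ _ (by positivity : (2*π:ℝ) ≠ 0)]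
                  filter_upwards [hO, hhalf, self_mem_nhdsWithin] with w hw1 hw2 hw3
                  have e1 := hint w hw1
                  have e2 := hint z hre'
                  rw [Real.dist_eq, e1, e2] at hw2
                  have h3 : |(nfn ℓ b y0 w0 (w:ℂ) - nfn ℓ b y0 w0 (z:ℂ) : ℤ)| < 1 := by
                    have h4 : |(nfn ℓ b y0 w0 (w:ℂ) : ℝ) - (nfn ℓ b y0 w0 (z:ℂ) : ℝ)| < 1 :=
                      lt_trans hw2 (by norm_num)
                    exact_mod_cast h4
                  rw [abs_lt] at h3
                  omega
              ,
            continuousOn_invFun := by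
              rw [Topology.IsInducing.subtypeVal.continuousOn_iff]
              show ContinuousOn (fun q : T × Bool × ℤ => ifn ℓ y0 w0 ((q.1:ℂ), q.2))
                (base ×ˢ univ)
              intro q hq
              have hqslit : (↑q.1 : ℂ) / y0 ∈ slitPlane := hq.1
              have cW : ContinuousWithinAt (fun r : T × Bool × ℤ => Wfn y0 w0 (↑r.1) r.2.2)
                  (base ×ˢ univ) q := by
                simp only [Wfn]
                apply ContinuousWithinAt.add
                · apply ContinuousWithinAt.sub continuousWithinAt_const
                  exact ((((continuous_subtype_val.comp continuous_fst).div_const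
                      y0).continuousAt).clog hqslit).continuousWithinAt
                · exact (Continuous.continuousWithinAt
                    ((continuous_of_discreteTopology
                      (f := fun n : ℤ => (n:ℂ) * (2 * (π:ℝ) * I))).comp
                      (continuous_snd.comp continuous_snd)))
              show ContinuousWithinAt (fun r : T × Bool × ℤ =>
                  (cond r.2.1 1 (-1) : ℂ) * (Wfn y0 w0 (↑r.1) r.2.2) ^ (-(1:ℂ)/ℓ))
                (base ×ˢ univ) q
              apply ContinuousWithinAt.mul
              · exact (Continuous.continuousWithinAt
                  ((continuous_of_discreteTopology
                    (f := fun s : Bool => cond s (1:ℂ) (-1))).comp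
                    (continuous_fst.comp continuous_snd)))
              · exact cW.cpow continuousWithinAt_const (hWslit q.1 q.2.2),
            source_eq := rfl,
            target_eq := rfl,
            proj_toFun := fun z _ => rfl }, ?_⟩
  show (y0 / y0) ∈ slitPlane
  rw [div_self hy0]
  exact Complex.one_mem_slitPlane

end Stmt10Aux

end

open Complex Set Metric Stmt10Aux in
theorem stmt10 (ℓ b x₀ : ℝ) (hℓ : 1 ≤ ℓ) (hb : 0 < b) (hx₀ : 0 < x₀) :
    ∃ (U : Set ℂ) (F₀ : ℂ → ℂ),
      IsOpen U ∧
      -- `U ⊆ D_*((−x₀, 0)) ∪ D_*((0, x₀))`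
      U ⊆ Metric.ball ((-(x₀ / 2) : ℝ) : ℂ) (x₀ / 2) ∪
          Metric.ball (((x₀ / 2) : ℝ) : ℂ) (x₀ / 2) ∧
      -- `(−x₀, 0) ∪ (0, x₀) ⊆ U`
      (∀ x : ℝ, x ∈ Set.Ioo (-x₀) 0 ∪ Set.Ioo 0 x₀ → (x : ℂ) ∈ U) ∧
      -- `F₀` is holomorphic on `U`
      DifferentiableOn ℂ F₀ U ∧
      -- `F₀` agrees with `f₀(x) = b·exp(−1/|x|^ℓ)` on `(−x₀, 0) ∪ (0, x₀)`
      (∀ x : ℝ, x ∈ Set.Ioo (-x₀) 0 ∪ Set.Ioo 0 x₀ →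
        F₀ (x : ℂ) = ((b * Real.exp (-1 / |x| ^ ℓ) : ℝ) : ℂ)) ∧
      -- `F₀ : U → B*(0, R)` is an (unbranched) covering map onto, `R = b·exp(−1/x₀^ℓ)`
      (∃ hm : Set.MapsTo F₀ U
          (Metric.ball (0 : ℂ) (b * Real.exp (-1 / x₀ ^ ℓ)) \ {0}),
        Set.SurjOn F₀ U (Metric.ball (0 : ℂ) (b * Real.exp (-1 / x₀ ^ ℓ)) \ {0}) ∧
        IsCoveringMap (Set.MapsTo.restrict F₀ U
          (Metric.ball (0 : ℂ) (b * Real.exp (-1 / x₀ ^ ℓ)) \ {0}) hm)) ∧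
      -- in particular `diam U = 2x₀`
      Metric.diam U = 2 * x₀ := by
  have hℓ0 : (0:ℝ) < ℓ := lt_of_lt_of_le one_pos hℓ
  set c : ℝ := x₀ ^ (-ℓ) with hcdef
  have hc : 0 < c := Real.rpow_pos_of_pos hx₀ _
  have hRe : -1 / x₀ ^ ℓ = -c := by
    rw [hcdef, Real.rpow_neg hx₀.le]
    ring
  have hm : MapsTo (FF ℓ b) (UU ℓ c) (ball (0:ℂ) (b * Real.exp (-c)) \ {0}) :=
    FF_mapsTo hℓ hb
  have hsub : UU ℓ c ⊆ Metric.ball ((-(x₀ / 2) : ℝ) : ℂ) (x₀ / 2) ∪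
      Metric.ball (((x₀ / 2) : ℝ) : ℂ) (x₀ / 2) := by
    intro z hz
    rcases hz with h | h
    · right
      exact Up_subset_ball hℓ hx₀ h
    · left
      have h2 : (-z : ℂ) ∈ ball (((x₀/2 : ℝ)):ℂ) (x₀/2) := Up_subset_ball hℓ hx₀ h
      rw [mem_ball, Complex.dist_eq] at h2 ⊢
      rw [show z - ((-(x₀/2):ℝ):ℂ) = -(-z - ((x₀/2:ℝ):ℂ)) by push_cast; ring, norm_neg]
      exact h2
  have hsub0 : UU ℓ c ⊆ ball (0:ℂ) x₀ := by
    intro z hz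
    have hd : dist (((x₀/2:ℝ)):ℂ) (0:ℂ) = x₀/2 := by
      rw [Complex.dist_eq, sub_zero, Complex.norm_real, Real.norm_eq_abs, abs_of_pos (by linarith)]
    have hd' : dist ((-(x₀/2):ℝ):ℂ) (0:ℂ) = x₀/2 := by
      rw [Complex.dist_eq, sub_zero, Complex.norm_real, Real.norm_eq_abs, abs_neg,
        abs_of_pos (by linarith : (0:ℝ) < x₀/2)]
    rcases hsub hz with h | h
    · exact Metric.ball_subset_ball' (by rw [hd']; linarith) h
    · exact Metric.ball_subset_ball' (by rw [hd]; linarith) h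
  have hxmem : ∀ x : ℝ, x ∈ Ioo (0:ℝ) x₀ → (x:ℂ) ∈ UU ℓ c ∧ ((-x : ℝ):ℂ) ∈ UU ℓ c := by
    intro x hx
    constructor
    · exact Or.inl (real_mem_Up hℓ hx₀ hx)
    · right
      show -(((-x:ℝ)):ℂ) ∈ Up ℓ c
      rw [show -(((-x:ℝ)):ℂ) = ((x:ℝ):ℂ) by push_cast; ring]
      exact real_mem_Up hℓ hx₀ hx
  refine ⟨UU ℓ c, FF ℓ b, isOpen_UU, hsub, ?_, diff_FF, ?_, ?_, ?_⟩
  · -- intervals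
    intro x hx
    rcases hx with hx | hx
    · have := (hxmem (-x) ⟨by linarith [hx.2], by linarith [hx.1]⟩).2
      rwa [show (((-(-x):ℝ)):ℂ) = ((x:ℝ):ℂ) by push_cast; ring] at this
    · exact (hxmem x hx).1
  · -- values
    intro x hx
    have hx0 : x ≠ 0 := by
      rcases hx with hx | hx
      exacts [ne_of_lt hx.2, ne_of_gt hx.1]
    exact FF_real hx0 hb
  · -- covering package
    rw [hRe]
    exact ⟨hm, surjOn_FF hℓ hb hc, covering_FF hℓ hb hc hm⟩
  · -- diameter
    have hbdd : Bornology.IsBounded (UU ℓ c) := Metric.isBounded_ball.subset hsub0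
    have hdiam_le : Metric.diam (UU ℓ c) ≤ 2 * x₀ :=
      (Metric.diam_mono hsub0 Metric.isBounded_ball).trans (Metric.diam_ball (by linarith))
    apply le_antisymm hdiam_le
    by_contra hlt
    push_neg at hlt
    obtain ⟨x, hx1, hx2⟩ := exists_between
      (show Metric.diam (UU ℓ c) / 2 < x₀ by linarith)
    have hx0' : 0 < x := lt_of_le_of_lt (by positivity) hx1
    obtain ⟨hmem1, hmem2⟩ := hxmem x ⟨hx0', hx2⟩
    have hdd := Metric.dist_le_diam_of_mem hbdd hmem1 hmem2
    have : dist ((x:ℝ):ℂ) ((-x : ℝ):ℂ) = 2 * x := by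
      rw [Complex.dist_eq, show ((x:ℝ):ℂ) - ((-x:ℝ):ℂ) = ((2*x : ℝ):ℂ) by push_cast; ring,
        Complex.norm_real, Real.norm_eq_abs, abs_of_pos (by linarith)]
    rw [this] at hdd
    linarith
end

section
/- For any θ ∈ (0, π) and any t with 0 < t < 1, if z ∈ D_θ then z^t ∈ D_θ. -/
/-- The unoriented angle `∠aob ∈ [0, π]` at the vertex `o` between the segments
from `o` to `a` and from `o` to `b` (for `a ≠ o ≠ b`). -/
noncomputable def ang (a o b : ℂ) : ℝ := |Complex.arg ((b - o) / (a - o))|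

/-- `D_θ = {z ∈ ℂ ∖ {0, 1} : ∠0z1 > π − θ}`. -/
def Dsec (θ : ℝ) : Set ℂ := {z | z ≠ 0 ∧ z ≠ 1 ∧ Real.pi - θ < ang 0 z 1}

open Set


private lemma sin_sub_cos_aux {φ : ℝ} (h0 : 0 < φ) (hπ : φ < Real.pi) :
    0 ≤ Real.sin φ - φ * Real.cos φ := by
  rcases le_or_gt (Real.cos φ) 0 with h | h
  · nlinarith [Real.sin_nonneg_of_nonneg_of_le_pi h0.le hπ.le]
  · have hφ2 : φ < Real.pi / 2 := by
      by_contra hc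
      push_neg at hc
      exact absurd (Real.cos_nonpos_of_pi_div_two_le_of_le hc (by linarith [Real.pi_pos]))
        (not_le.2 h)
    have h2 := Real.lt_tan h0 hφ2
    rw [Real.tan_eq_sin_div_cos] at h2
    have h3 := (lt_div_iff₀ h).1 h2
    linarith

private lemma core_ineq {φ : ℝ} (h0 : 0 < φ) (hπ : φ < Real.pi) (x : ℝ) :
    0 ≤ φ * Real.exp x - x * Real.sin φ - φ * Real.cos φ := by
  have hs : 0 < Real.sin φ := Real.sin_pos_of_pos_of_lt_pi h0 hπ
  set c : ℝ := Real.sin φ / φ with hc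
  have hc0 : 0 < c := div_pos hs h0
  have hc1 : c ≤ 1 := (div_le_one h0).2 (Real.sin_le h0.le)
  have hlogc : Real.log c ≤ 0 := Real.log_nonpos hc0.le hc1
  have htang : c * (1 + (x - Real.log c)) ≤ Real.exp x := by
    have h1 : (x - Real.log c) + 1 ≤ Real.exp (x - Real.log c) := Real.add_one_le_exp _
    have h2 : Real.exp (x - Real.log c) = Real.exp x / c := by
      rw [Real.exp_sub, Real.exp_log hc0]
    rw [h2] at h1
    have := (mul_le_mul_of_nonneg_left h1 hc0.le)
    calc c * (1 + (x - Real.log c)) = c * ((x - Real.log c) + 1) := by ring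
      _ ≤ c * (Real.exp x / c) := this
      _ = Real.exp x := by field_simp
  have hkey : 0 ≤ Real.sin φ - φ * Real.cos φ := sin_sub_cos_aux h0 hπ
  have hc' : φ * c = Real.sin φ := by rw [hc]; field_simp [h0.ne']
  have hexp2 : Real.sin φ * (1 + (x - Real.log c)) ≤ φ * Real.exp x := by
    calc Real.sin φ * (1 + (x - Real.log c)) = φ * (c * (1 + (x - Real.log c))) := by
          rw [← hc']; ring
      _ ≤ φ * Real.exp x := mul_le_mul_of_nonneg_left htang h0.le
  nlinarith [hexp2, hkey, mul_nonneg hs.le (neg_nonneg.2 hlogc)]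

private lemma mem_Dsec_iff_of_im_pos {θ : ℝ} (hθπ : θ < Real.pi) {z : ℂ}
    (him : 0 < z.im) : z ∈ Dsec θ ↔ z.arg - (1 - z).arg < θ := by
  have hz0 : z ≠ 0 := fun h => by simp [h] at him
  have hz1 : z ≠ 1 := fun h => by simp [h] at him
  have h1z : (1 : ℂ) - z ≠ 0 := sub_ne_zero.2 (Ne.symm hz1)
  have hargz0 : 0 < z.arg := by
    rcases (Complex.arg_nonneg_iff.2 him.le).lt_or_eq with h | h
    · exact h
    · exact absurd (Complex.arg_eq_zero_iff.1 h.symm).2 (by linarith)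
  have hargzπ : z.arg < Real.pi := by
    rcases (Complex.arg_le_pi z).lt_or_eq with h | h
    · exact h
    · exact absurd (Complex.arg_eq_pi_iff.1 h).2 (by linarith)
  have him1z : (1 - z).im < 0 := by simp [him]
  have harg1z0 : (1 - z).arg < 0 := Complex.arg_neg_iff.2 him1z
  have harg1zπ : -Real.pi < (1 - z).arg := Complex.neg_pi_lt_arg _
  set u : ℂ := (1 - z) / (0 - z) with hu
  have huim : 0 < u.im := by
    have hueq : u = 1 - z⁻¹ := by
      rw [hu, zero_sub, div_neg, ← neg_div, neg_sub, sub_div, div_self hz0, one_div]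
    rw [hueq]
    have : (0:ℝ) < Complex.normSq z := Complex.normSq_pos.2 hz0
    simp only [Complex.sub_im, Complex.one_im, Complex.inv_im, zero_sub, neg_div, neg_neg]
    positivity
  have hargu : u.arg = (1 - z).arg - z.arg + Real.pi := by
    have h1 : ((u.arg : Real.Angle)) = ((1 - z).arg : Real.Angle) - (((0:ℂ) - z).arg : Real.Angle) :=
      Complex.arg_div_coe_angle h1z (by simpa using hz0)
    have h2 : ((((0:ℂ) - z).arg : ℝ) : Real.Angle) = (z.arg : ℝ) + (Real.pi : ℝ) := by
      rw [zero_sub]; exact Complex.arg_neg_coe_angle hz0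
    have h3 : ((u.arg : ℝ) : Real.Angle) = (((1 - z).arg - z.arg + Real.pi : ℝ) : Real.Angle) := by
      rw [h1, h2, Real.Angle.coe_add, Real.Angle.coe_sub, sub_add_eq_sub_sub,
        sub_eq_add_neg (_ - _), Real.Angle.neg_coe_pi]
    have hmem : (1 - z).arg - z.arg + Real.pi ∈ Set.Ioc (-Real.pi) Real.pi := by
      constructor <;> [linarith; linarith]
    have := congrArg Real.Angle.toReal h3
    rwa [Real.Angle.toReal_coe_eq_self_iff_mem_Ioc.2 (Complex.arg_mem_Ioc u),
      Real.Angle.toReal_coe_eq_self_iff_mem_Ioc.2 hmem] at this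
  have hupos : 0 < u.arg := by
    rcases (Complex.arg_nonneg_iff.2 huim.le).lt_or_eq with h | h
    · exact h
    · exact absurd (Complex.arg_eq_zero_iff.1 h.symm).2 (by linarith)
  have hang : ang 0 z 1 = (1 - z).arg - z.arg + Real.pi := by
    rw [show ang 0 z 1 = |u.arg| from rfl, abs_of_pos hupos, hargu]
  constructor
  · rintro ⟨-, -, h⟩
    rw [hang] at h
    linarith
  · intro h
    exact ⟨hz0, hz1, by rw [hang]; linarith⟩

private lemma key_mono {z : ℂ} (him : 0 < z.im) {t : ℝ} (ht0 : 0 < t) (ht1 : t ≤ 1) :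
    t * z.arg - (1 - z ^ (t : ℂ)).arg ≤ z.arg - (1 - z).arg := by
  have hz0 : z ≠ 0 := fun h => by simp [h] at him
  have hargz0 : 0 < z.arg := by
    rcases (Complex.arg_nonneg_iff.2 him.le).lt_or_eq with h | h
    · exact h
    · exact absurd (Complex.arg_eq_zero_iff.1 h.symm).2 (by linarith)
  have hargzπ : z.arg < Real.pi := by
    rcases (Complex.arg_le_pi z).lt_or_eq with h | h
    · exact h
    · exact absurd (Complex.arg_eq_pi_iff.1 h).2 (by linarith)
  set L : ℂ := Complex.log z with hLdef
  have hLim : L.im = z.arg := Complex.log_im z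
  set α : ℝ := z.arg with hα
  set F : ℝ → ℝ := fun s => s * α - (Complex.log (1 - Complex.exp ((s : ℂ) * L))).im with hF
  -- basic facts about w s for s ∈ (0,1]
  have hwim : ∀ s : ℝ, 0 < s → s ≤ 1 →
      (Complex.exp ((s : ℂ) * L)).im = Real.exp (s * L.re) * Real.sin (s * α) := by
    intro s _ _
    rw [Complex.exp_im]
    congr 1 <;> simp [Complex.mul_re, Complex.mul_im, hLim]
  have hφ : ∀ s : ℝ, 0 < s → s ≤ 1 → 0 < s * α ∧ s * α < Real.pi := by
    intro s hs hs1
    constructor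
    · positivity
    · calc s * α ≤ 1 * α := by nlinarith
        _ < Real.pi := by simpa using hargzπ
  have hwim_pos : ∀ s : ℝ, 0 < s → s ≤ 1 → 0 < (Complex.exp ((s : ℂ) * L)).im := by
    intro s hs hs1
    rw [hwim s hs hs1]
    obtain ⟨h1, h2⟩ := hφ s hs hs1
    have := Real.sin_pos_of_pos_of_lt_pi h1 h2
    positivity
  have hslit : ∀ s : ℝ, 0 < s → s ≤ 1 →
      (1 - Complex.exp ((s : ℂ) * L)) ∈ Complex.slitPlane := by
    intro s hs hs1
    rw [Complex.mem_slitPlane_iff]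
    right
    have := hwim_pos s hs hs1
    simp only [Complex.sub_im, Complex.one_im, zero_sub]
    linarith
  -- derivative
  have hderiv : ∀ s : ℝ, 0 < s → s ≤ 1 → HasDerivAt F
      (α - ((-(Complex.exp ((s : ℂ) * L) * L)) / (1 - Complex.exp ((s : ℂ) * L))).im) s := by
    intro s hs hs1
    have h0 : HasDerivAt (fun s : ℝ => (s : ℂ) * L) L s := by
      simpa using (Complex.ofRealCLM.hasDerivAt (x := s)).mul_const L
    have hexp := h0.cexp
    have hsub := hexp.const_sub (1 : ℂ)
    have hlog := hsub.clog_real (hslit s hs hs1)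
    have himd := Complex.imCLM.hasFDerivAt.comp_hasDerivAt s hlog
    have hmul : HasDerivAt (fun s : ℝ => s * α) α s := by
      simpa using (hasDerivAt_id s).mul_const α
    exact hmul.sub himd
  -- derivative nonneg
  have hdnonneg : ∀ s : ℝ, 0 < s → s ≤ 1 →
      0 ≤ α - ((-(Complex.exp ((s : ℂ) * L) * L)) / (1 - Complex.exp ((s : ℂ) * L))).im := by
    intro s hs hs1
    set w : ℂ := Complex.exp ((s : ℂ) * L) with hw
    set v : ℂ := 1 - w with hv
    have hvim : v.im = -w.im := by simp [hv]
    have hvre : v.re = 1 - w.re := by simp [hv]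
    have hN : 0 < Complex.normSq v := by
      rw [Complex.normSq_pos]
      intro h
      have := hwim_pos s hs hs1
      rw [← hw] at this
      have : v.im = 0 := by rw [h]; simp
      rw [hvim] at this
      linarith
    obtain ⟨hφ0, hφπ⟩ := hφ s hs hs1
    have hwre : w.re = Real.exp (s * L.re) * Real.cos (s * α) := by
      rw [hw, Complex.exp_re]
      congr 1 <;> simp [Complex.mul_re, Complex.mul_im, hLim]
    have hwim' : w.im = Real.exp (s * L.re) * Real.sin (s * α) := hwim s hs hs1
    have hcore : 0 ≤ (s * α) * Real.exp (-(s * L.re)) - (-(s * L.re)) * Real.sin (s * α)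
        - (s * α) * Real.cos (s * α) := core_ineq hφ0 hφπ _
    have hEE : Real.exp (-(s * L.re)) * Real.exp (s * L.re) = 1 := by
      rw [← Real.exp_add]; simp
    have hmul : 0 ≤ s * (α * (1 - w.re) + L.re * w.im) := by
      rw [hwre, hwim']
      nlinarith [mul_le_mul_of_nonneg_left hcore (Real.exp_pos (s * L.re)).le]
    have hX : 0 ≤ α * (1 - w.re) + L.re * w.im := by nlinarith [hmul]
    rw [Complex.div_im, div_sub_div_same, sub_nonneg, div_le_iff₀ hN]
    simp only [Complex.neg_im, Complex.neg_re, Complex.mul_im, Complex.mul_re, hvre, hvim,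
      Complex.normSq_apply, hLim]
    nlinarith [hX]
  -- monotonicity on [t, 1]
  have hmono : MonotoneOn F (Icc t 1) := by
    apply monotoneOn_of_deriv_nonneg (convex_Icc t 1)
    · intro s hs
      exact ((hderiv s (lt_of_lt_of_le ht0 hs.1) hs.2).continuousAt).continuousWithinAt
    · intro s hs
      rw [interior_Icc] at hs
      exact ((hderiv s (lt_of_lt_of_le ht0 hs.1.le) hs.2.le).differentiableAt).differentiableWithinAt
    · intro s hs
      rw [interior_Icc] at hs
      rw [(hderiv s (lt_of_lt_of_le ht0 hs.1.le) hs.2.le).deriv]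
      exact hdnonneg s (lt_of_lt_of_le ht0 hs.1.le) hs.2.le
  have hFt : F t ≤ F 1 := hmono (left_mem_Icc.2 ht1) (right_mem_Icc.2 ht1) ht1
  -- translate
  have hzt : z ^ (t : ℂ) = Complex.exp ((t : ℂ) * L) := by
    rw [Complex.cpow_def_of_ne_zero hz0, mul_comm]
  have hF1 : F 1 = α - (1 - z).arg := by
    rw [hF]
    simp only [one_mul, Complex.ofReal_one]
    rw [Complex.exp_log hz0, Complex.log_im]
  have hFt' : F t = t * α - (1 - z ^ (t : ℂ)).arg := by
    rw [hF, hzt]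
    simp only [Complex.log_im]
  rw [← hFt', ← hF1]
  exact hFt

private lemma main_pos {θ t : ℝ} (hθπ : θ < Real.pi) (ht0 : 0 < t) (ht1 : t < 1)
    {z : ℂ} (him : 0 < z.im) (hz : z ∈ Dsec θ) : z ^ (t : ℂ) ∈ Dsec θ := by
  have hz0 : z ≠ 0 := fun h => by simp [h] at him
  have hargz0 : 0 < z.arg := by
    rcases (Complex.arg_nonneg_iff.2 him.le).lt_or_eq with h | h
    · exact h
    · exact absurd (Complex.arg_eq_zero_iff.1 h.symm).2 (by linarith)
  have hargzπ : z.arg < Real.pi := by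
    rcases (Complex.arg_le_pi z).lt_or_eq with h | h
    · exact h
    · exact absurd (Complex.arg_eq_pi_iff.1 h).2 (by linarith)
  have h1 := (mem_Dsec_iff_of_im_pos hθπ him).1 hz
  have hzt : z ^ (t : ℂ) = Complex.exp ((t : ℂ) * Complex.log z) := by
    rw [Complex.cpow_def_of_ne_zero hz0, mul_comm]
  have htL : ((t : ℂ) * Complex.log z).im = t * z.arg := by
    simp [Complex.mul_im, Complex.log_im]
  have hrange : 0 < t * z.arg ∧ t * z.arg < Real.pi := by
    constructor
    · positivity
    · nlinarith
  have hwim : 0 < (z ^ (t : ℂ)).im := by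
    rw [hzt, Complex.exp_im, htL]
    have := Real.sin_pos_of_pos_of_lt_pi hrange.1 hrange.2
    positivity
  have harg : (z ^ (t : ℂ)).arg = t * z.arg := by
    rw [hzt, ← Complex.log_im, Complex.log_exp (by rw [htL]; linarith) (by rw [htL]; linarith), htL]
  rw [mem_Dsec_iff_of_im_pos hθπ hwim, harg]
  have := key_mono him ht0 ht1.le
  linarith

private lemma mem_Dsec_conj {θ : ℝ} {z : ℂ} (hz : z ∈ Dsec θ) :
    (starRingEnd ℂ) z ∈ Dsec θ := by
  obtain ⟨h0, h1, h2⟩ := hz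
  refine ⟨by simpa using h0, ?_, ?_⟩
  · intro h
    apply h1
    have := congrArg (starRingEnd ℂ) h
    simpa using this
  · have hconj : (1 - (starRingEnd ℂ) z) / (0 - (starRingEnd ℂ) z)
        = (starRingEnd ℂ) ((1 - z) / (0 - z)) := by
      simp [map_div₀, map_sub]
    unfold ang at h2 ⊢
    rw [hconj, Complex.arg_conj]
    split
    · next h => rwa [h] at h2
    · rw [abs_neg]; exact h2

theorem stmt11 (θ t : ℝ) (hθ0 : 0 < θ) (hθπ : θ < Real.pi)
    (ht0 : 0 < t) (ht1 : t < 1)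
    (z : ℂ) (hz : z ∈ Dsec θ) :
    z ^ (t : ℂ) ∈ Dsec θ := by
  rcases lt_trichotomy z.im 0 with hneg | hzero | hpos
  · have hargne : z.arg ≠ Real.pi := fun h => by
      have := (Complex.arg_eq_pi_iff.1 h).2; linarith
    have hcmem : (starRingEnd ℂ) z ∈ Dsec θ := mem_Dsec_conj hz
    have hcim : 0 < ((starRingEnd ℂ) z).im := by
      rw [Complex.conj_im]; linarith
    have h2 := main_pos hθπ ht0 ht1 hcim hcmem
    have h3 : (starRingEnd ℂ) z ^ (t : ℂ) = (starRingEnd ℂ) (z ^ (t : ℂ)) := by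
      rw [Complex.conj_cpow _ _ hargne, Complex.conj_ofReal]
    rw [h3] at h2
    have h4 := mem_Dsec_conj h2
    rwa [Complex.conj_conj] at h4
  · -- real case
    obtain ⟨h0, h1, h2⟩ := hz
    have hzre : z = (z.re : ℂ) := by
      apply Complex.ext <;> simp [hzero]
    set x : ℝ := z.re with hx
    have hx01 : 0 < x ∧ x < 1 := by
      by_contra hc
      have hxne0 : x ≠ 0 := fun h => h0 (by rw [hzre, h]; simp)
      have hxne1 : x ≠ 1 := fun h => h1 (by rw [hzre, h]; simp)
      have hpos' : 0 < (1 - x) / (0 - x) := by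
        rcases hxne0.lt_or_gt with h | h
        · apply div_pos (by linarith) (by linarith)
        · rcases hxne1.lt_or_gt with h' | h'
          · exact absurd ⟨h, h'⟩ hc
          · apply div_pos_of_neg_of_neg (by linarith) (by linarith)
      have : ang 0 z 1 = 0 := by
        unfold ang
        rw [hzre]
        have : ((1 : ℂ) - (x : ℂ)) / (0 - (x : ℂ)) = (((1 - x) / (0 - x) : ℝ) : ℂ) := by
          push_cast; ring
        rw [this, Complex.arg_ofReal_of_nonneg hpos'.le, abs_zero]
      rw [this] at h2
      linarith
    -- z^t is real in (0,1)
    set r : ℝ := x ^ t with hr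
    have hrpos : 0 < r := Real.rpow_pos_of_pos hx01.1 t
    have hrlt1 : r < 1 := Real.rpow_lt_one hx01.1.le hx01.2 ht0
    have hzt : z ^ (t : ℂ) = (r : ℂ) := by
      rw [hzre, ← Complex.ofReal_cpow hx01.1.le]
    rw [hzt]
    refine ⟨by exact_mod_cast hrpos.ne', by exact_mod_cast hrlt1.ne, ?_⟩
    have hneg' : (1 - r) / (0 - r) < 0 :=
      div_neg_of_pos_of_neg (by linarith) (by linarith)
    have : ang 0 (r : ℂ) 1 = Real.pi := by
      unfold ang
      have : ((1 : ℂ) - (r : ℂ)) / (0 - (r : ℂ)) = (((1 - r) / (0 - r) : ℝ) : ℂ) := by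
        push_cast; ring
      rw [this, Complex.arg_ofReal_of_neg hneg', abs_of_pos Real.pi_pos]
    rw [this]
    linarith
  · exact main_pos hθπ ht0 ht1 hpos hz
end

section
/- For every ε > 0 there exists δ > 0 such that the following holds: for every θ ∈ (0, π/2], every z ∈ D_θ with ∠01z < δθ, and every t with 0 < t < 1, one has ∠01z^t < εθ. -/
open Real

lemma abs_sin_le_aux (x : ℝ) : |Real.sin x| ≤ |x| := by
  have hπ := Real.pi_gt_three
  rcases le_or_gt |x| π with h | h
  · have e : Real.sin |x| = |Real.sin x| := by
      rcases abs_cases x with ⟨h1, h2⟩ | ⟨h1, h2⟩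
      · rw [h1, abs_of_nonneg (Real.sin_nonneg_of_nonneg_of_le_pi h2 (h1 ▸ h))]
      · have hx0 : x ≤ 0 := by linarith
        have hxπ : -π ≤ x := by
          have := neg_abs_le x; linarith
        rw [h1, Real.sin_neg,
          abs_of_nonpos (Real.sin_nonpos_of_nonpos_of_neg_pi_le hx0 hxπ)]
    rw [← e]
    exact Real.sin_le (abs_nonneg x)
  · have := Real.abs_sin_le_one x
    linarith

lemma jordan_aux {x : ℝ} (hx : |x| ≤ π / 2) : |x| ≤ π / 2 * |Real.sin x| := by
  have hπ : (0:ℝ) < π := Real.pi_pos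
  have h1 : 2 / π * |x| ≤ Real.sin |x| := Real.mul_le_sin (abs_nonneg x) hx
  have h2 : Real.sin |x| ≤ |Real.sin x| := by
    rcases abs_cases x with ⟨h, _⟩ | ⟨h, _⟩
    · rw [h]; exact le_abs_self _
    · rw [h, Real.sin_neg]; exact neg_le_abs _
  have h3 : 2 / π * |x| ≤ |Real.sin x| := h1.trans h2
  have h4 := mul_le_mul_of_nonneg_left h3 (by positivity : (0:ℝ) ≤ π / 2)
  calc |x| = π / 2 * (2 / π * |x|) := by field_simp
    _ ≤ π / 2 * |Real.sin x| := h4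

lemma abs_arg_neg_aux {v : ℂ} (hv : v ≠ 0) :
    |Complex.arg (-v)| = π - |Complex.arg v| := by
  rcases lt_trichotomy v.im 0 with h | h | h
  · rw [Complex.arg_neg_eq_arg_add_pi_of_im_neg h]
    have h1 : Complex.arg v < 0 := Complex.arg_neg_iff.2 h
    have h2 : -π < Complex.arg v := Complex.neg_pi_lt_arg v
    rw [abs_of_nonneg (by linarith), abs_of_neg h1]; ring
  · rcases lt_trichotomy v.re 0 with hr | hr | hr
    · have hπv : Complex.arg v = π := Complex.arg_eq_pi_iff.2 ⟨hr, h⟩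
      have h0 : Complex.arg (-v) = 0 := by
        refine Complex.arg_eq_zero_iff.2 ⟨?_, by simp [h]⟩
        simp only [Complex.neg_re]; linarith
      rw [hπv, h0, abs_of_pos Real.pi_pos]; simp
    · exact absurd (by apply Complex.ext <;> simp [hr, h]) hv
    · have h0 : Complex.arg v = 0 := Complex.arg_eq_zero_iff.2 ⟨hr.le, h⟩
      have hπv : Complex.arg (-v) = π := by
        refine Complex.arg_eq_pi_iff.2 ⟨?_, by simp [h]⟩
        simp only [Complex.neg_re]; linarith
      rw [hπv, h0, abs_of_pos Real.pi_pos]; simp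
  · rw [Complex.arg_neg_eq_arg_sub_pi_of_im_pos h]
    have h1 : 0 < Complex.arg v := by
      rcases (Complex.arg_nonneg_iff.2 h.le).lt_or_eq with h' | h'
      · exact h'
      · exact absurd (Complex.arg_eq_zero_iff.1 h'.symm).2 h.ne'
    have h2 : Complex.arg v ≤ π := Complex.arg_le_pi v
    rw [abs_of_nonpos (by linarith), abs_of_pos h1]; ring

set_option maxHeartbeats 1000000 in
theorem stmt12 (ε : ℝ) (hε : 0 < ε) :
    ∃ δ : ℝ, 0 < δ ∧
      ∀ θ : ℝ, 0 < θ → θ ≤ Real.pi / 2 →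
        ∀ z ∈ Dsec θ, ang 0 1 z < δ * θ →
          ∀ t : ℝ, 0 < t → t < 1 → ang 0 1 (z ^ (t : ℂ)) < ε * θ := by
  have hπ : (0:ℝ) < π := Real.pi_pos
  have hπ4 : π < 3.15 := Real.pi_lt_d2
  set E : ℝ := min ε 1 / 2 with hEdef
  have hE0 : 0 < E := by
    have : 0 < min ε 1 := lt_min hε one_pos
    positivity
  have hEε : E ≤ ε / 2 := by
    have := min_le_left ε 1
    rw [hEdef]; linarith
  have hE1 : E ≤ 1 / 2 := by
    have := min_le_right ε 1
    rw [hEdef]; linarith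
  set δ : ℝ := E / (8 * Real.exp (1 / E)) with hδdef
  have hexp1 : (1:ℝ) ≤ Real.exp (1 / E) := Real.one_le_exp (by positivity)
  have hδ0 : 0 < δ := div_pos hE0 (by positivity)
  have hδE : Real.exp (1 / E) * δ = E / 8 := by
    rw [hδdef]; field_simp
  have hδ16 : δ ≤ 1 / 16 := by
    have h8 : (8:ℝ) ≤ 8 * Real.exp (1 / E) := by linarith
    calc δ ≤ E / 8 := by
          rw [hδdef]
          exact div_le_div_of_nonneg_left hE0.le (by norm_num) h8
      _ ≤ 1 / 16 := by linarith
  refine ⟨δ, hδ0, ?_⟩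
  intro θ hθ0 hθπ z hz hangz t ht0 ht1
  obtain ⟨hz0, hz1, hzang⟩ := hz
  have hθ2 : θ ≤ 2 := by linarith
  have hδθ : δ * θ ≤ 1 / 2 := by
    have := mul_le_mul hδ16 hθ2 hθ0.le (by norm_num : (0:ℝ) ≤ 1/16)
    linarith
  -- the auxiliary point v = 1/z - 1
  set v : ℂ := z⁻¹ - 1 with hvdef
  have hv0 : v ≠ 0 := by
    intro h
    apply hz1
    have h2 : z⁻¹ = 1 := by rwa [hvdef, sub_eq_zero] at h
    simpa [inv_eq_one] using h2
  have key : (1 - z) / (0 - z) = -v := by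
    rw [hvdef, zero_sub, div_neg, sub_div, div_self hz0, one_div, neg_sub]
  have hzang' : π - θ < |Complex.arg (-v)| := by
    have e : ang 0 z 1 = |Complex.arg (-v)| := by rw [ang, key]
    rwa [e] at hzang
  have hvθ : |Complex.arg v| < θ := by
    rw [abs_arg_neg_aux hv0] at hzang'; linarith
  have hvπ2 : |Complex.arg v| < π / 2 := lt_of_lt_of_le hvθ hθπ
  have habsv : 0 < ‖v‖ := norm_pos_iff.mpr hv0
  have hvre : 0 < v.re := by
    have hcos : 0 < Real.cos (Complex.arg v) := by
      have h := abs_lt.mp hvπ2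
      exact Real.cos_pos_of_mem_Ioo ⟨h.1, h.2⟩
    have h := Complex.cos_arg hv0
    rw [h] at hcos
    rcases div_pos_iff.mp hcos with ⟨h1, _⟩ | ⟨_, h2⟩
    · exact h1
    · linarith
  have hnsq : 0 < Complex.normSq z := Complex.normSq_pos.2 hz0
  have hvre' : v.re = z.re / Complex.normSq z - 1 := by
    rw [hvdef]; simp [Complex.sub_re, Complex.inv_re]
  have hrez : Complex.normSq z < z.re := by
    rw [hvre'] at hvre
    have h1 : 1 < z.re / Complex.normSq z := by linarith
    exact (one_lt_div hnsq).mp h1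
  set r : ℝ := ‖z‖ with hrdef
  have hr0 : 0 < r := norm_pos_iff.mpr hz0
  have hnsqr : r ^ 2 = Complex.normSq z := Complex.sq_norm z
  have hrez' : r ^ 2 < z.re := by rw [hnsqr]; exact hrez
  have hrepos : 0 < z.re := lt_of_le_of_lt (by positivity) hrez'
  have hrle : z.re ≤ r := Complex.re_le_norm z
  have hr1 : r < 1 := by
    have hrr : r * r < r * 1 := by
      rw [mul_one, ← pow_two]
      exact lt_of_lt_of_le hrez' hrle
    exact lt_of_mul_lt_mul_left hrr hr0.le
  set φ : ℝ := Complex.arg z with hφdef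
  set s : ℝ := -Real.log r with hsdef
  have hs0 : 0 < s := by
    rw [hsdef]
    have := Real.log_neg hr0 hr1
    linarith
  have hrexp : r = Real.exp (-s) := by
    rw [hsdef, neg_neg, Real.exp_log hr0]
  have h1rs : 1 - r ≤ s := by
    have := Real.add_one_le_exp (-s)
    rw [← hrexp] at this
    linarith
  -- |φ| ≤ |arg v| < θ
  have hφπ2 : |φ| ≤ π / 2 := Complex.abs_arg_le_pi_div_two_iff.2 hrepos.le
  have hsinφ : |Real.sin φ| = |z.im| / r := by
    rw [hφdef, Complex.sin_arg, abs_div, abs_norm]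
  have hvim : |v.im| = |z.im| / Complex.normSq z := by
    rw [hvdef]
    simp [Complex.sub_im, Complex.inv_im, abs_div, abs_of_pos hnsq, neg_div]
  have hsinv : |Real.sin (Complex.arg v)| = |v.im| / ‖v‖ := by
    rw [Complex.sin_arg, abs_div, abs_norm]
  have h1zabs : ‖1 - z‖ ≤ 1 := by
    have hns : Complex.normSq (1 - z) ≤ 1 := by
      have h1 : Complex.normSq (1 - z) = (1 - z.re)^2 + z.im^2 := by
        simp [Complex.normSq_apply, Complex.sub_re, Complex.sub_im]; ring
      have h2 : z.im ^ 2 = Complex.normSq z - z.re ^ 2 := by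
        simp [Complex.normSq_apply]; ring
      have h4 : (1 - z.re)^2 = 1 - 2*z.re + z.re^2 := by ring
      linarith
    have h3 := Complex.sq_norm (1 - z)
    refine (pow_le_one_iff_of_nonneg (norm_nonneg _) two_ne_zero).mp ?_
    rw [h3]; exact hns
  have hzv : z * v = 1 - z := by
    rw [hvdef]; field_simp
  have habsvr : r * ‖v‖ ≤ 1 := by
    have h1 : ‖z * v‖ = r * ‖v‖ := norm_mul z v
    rw [hzv] at h1
    linarith [h1.symm.le.trans h1zabs]
  have hsinle : |Real.sin φ| ≤ |Real.sin (Complex.arg v)| := by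
    rw [hsinφ, hsinv, hvim, div_le_div_iff₀ hr0 habsv]
    have h3 : Complex.normSq z * ‖v‖ ≤ r := by
      calc Complex.normSq z * ‖v‖ = r * (r * ‖v‖) := by
            rw [← hnsqr]; ring
        _ ≤ r * 1 := mul_le_mul_of_nonneg_left habsvr hr0.le
        _ = r := by ring
    calc |z.im| * ‖v‖
        = (|z.im| / Complex.normSq z) * (Complex.normSq z * ‖v‖) := by
          field_simp
      _ ≤ (|z.im| / Complex.normSq z) * r :=
          mul_le_mul_of_nonneg_left h3 (by positivity)
  have hφv : |φ| ≤ |Complex.arg v| := by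
    by_contra hcon
    push_neg at hcon
    have hlt := Real.sin_lt_sin_of_lt_of_le_pi_div_two
      (by linarith [abs_nonneg (Complex.arg v)] : -(π/2) ≤ |Complex.arg v|) hφπ2 hcon
    have e1 : Real.sin |φ| = |Real.sin φ| := by
      rcases abs_cases φ with ⟨h, h'⟩ | ⟨h, h'⟩
      · rw [h, abs_of_nonneg (Real.sin_nonneg_of_nonneg_of_le_pi h' (by linarith))]
      · rw [h, Real.sin_neg,
          abs_of_nonpos (Real.sin_nonpos_of_nonpos_of_neg_pi_le h'.le (by linarith))]
    have e2 : Real.sin |Complex.arg v| = |Real.sin (Complex.arg v)| := by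
      rcases abs_cases (Complex.arg v) with ⟨h, h'⟩ | ⟨h, h'⟩
      · rw [h, abs_of_nonneg (Real.sin_nonneg_of_nonneg_of_le_pi h' (by linarith))]
      · rw [h, Real.sin_neg,
          abs_of_nonpos (Real.sin_nonpos_of_nonpos_of_neg_pi_le h'.le (by linarith))]
    rw [e1, e2] at hlt
    linarith [hsinle]
  have hφθ : |φ| < θ := lt_of_le_of_lt hφv hvθ
  -- the hypothesis: |arg (1 - z)| < δθ
  have hH : |Complex.arg (1 - z)| < δ * θ := by
    have e : (z - 1) / ((0:ℂ) - 1) = 1 - z := by ring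
    rw [ang, e] at hangz
    exact hangz
  have h1zre : 0 < (1 - z).re := by
    simp only [Complex.sub_re, Complex.one_re]; linarith
  have h1zne : (1 : ℂ) - z ≠ 0 := by
    intro h
    rw [sub_eq_zero] at h
    exact hz1 h.symm
  have habs1z : 0 < ‖1 - z‖ := norm_pos_iff.mpr h1zne
  have hImz : |z.im| < δ * θ * ‖1 - z‖ := by
    have hsin : |Real.sin (Complex.arg (1 - z))| = |z.im| / ‖1 - z‖ := by
      rw [Complex.sin_arg, abs_div, abs_norm]
      congr 1
      simp [Complex.sub_im]
    have h1 : |z.im| / ‖1 - z‖ ≤ |Complex.arg (1 - z)| := by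
      rw [← hsin]
      exact abs_sin_le_aux _
    rw [div_le_iff₀ habs1z] at h1
    calc |z.im| ≤ |Complex.arg (1 - z)| * ‖1 - z‖ := h1
      _ < δ * θ * ‖1 - z‖ := mul_lt_mul_of_pos_right hH habs1z
  have hδθ0 : 0 < δ * θ := mul_pos hδ0 hθ0
  have hImz2 : |z.im| < 4 * (δ * θ) * s := by
    have habs_le : ‖1 - z‖ ≤ (1 - z.re) + |z.im| := by
      have h1 := Complex.norm_le_abs_re_add_abs_im (1 - z)
      have e1 : |(1 - z).re| = 1 - z.re := abs_of_pos h1zre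
      have e2 : |(1 - z).im| = |z.im| := by simp [Complex.sub_im]
      rw [e1, e2] at h1
      exact h1
    have h1 : 1 - z.re ≤ 2 * (1 - r) := by
      have e : (1 - r) * (1 + r) ≤ (1 - r) * 2 :=
        mul_le_mul_of_nonneg_left (by linarith) (by linarith)
      have e2 : (1 - r) * (1 + r) = 1 - r^2 := by ring
      linarith [hrez', e, e2]
    linarith [mul_le_mul_of_nonneg_left habs_le hδθ0.le,
      mul_le_mul_of_nonneg_right hδθ (abs_nonneg z.im),
      mul_le_mul_of_nonneg_left h1 hδθ0.le,
      mul_le_mul_of_nonneg_left h1rs (by positivity : (0:ℝ) ≤ 2 * (δ * θ))]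
  -- the power z^t
  have hztexp : z ^ (t:ℂ) = Complex.exp (Complex.log z * t) :=
    Complex.cpow_def_of_ne_zero hz0 _
  set R : ℝ := Real.exp (Real.log r * t) with hRdef
  have hR0 : 0 < R := Real.exp_pos _
  have hR1 : R < 1 := by
    rw [hRdef, Real.exp_lt_one_iff]
    exact mul_neg_of_neg_of_pos (Real.log_neg hr0 hr1) ht0
  have hwre : (z ^ (t:ℂ)).re = R * Real.cos (φ * t) := by
    rw [hztexp, Complex.exp_re]
    simp [Complex.mul_re, Complex.mul_im, Complex.log_re, Complex.log_im,
      Complex.ofReal_re, Complex.ofReal_im, hRdef, hrdef, hφdef]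
  have hwim : (z ^ (t:ℂ)).im = R * Real.sin (φ * t) := by
    rw [hztexp, Complex.exp_im]
    simp [Complex.mul_re, Complex.mul_im, Complex.log_re, Complex.log_im,
      Complex.ofReal_re, Complex.ofReal_im, hRdef, hrdef, hφdef]
  have egoal : ang 0 1 (z ^ (t:ℂ)) = |Complex.arg (1 - z ^ (t:ℂ))| := by
    rw [ang]
    congr 2
    ring
  rw [egoal]
  have hw1re : (1 - z ^ (t:ℂ)).re = 1 - R * Real.cos (φ * t) := by
    simp [Complex.sub_re, hwre]
  have hw1im : |(1 - z ^ (t:ℂ)).im| = R * |Real.sin (φ * t)| := by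
    simp only [Complex.sub_im, Complex.one_im, hwim, zero_sub, abs_neg, abs_mul,
      abs_of_pos hR0]
  have h1R : 0 < 1 - R := by linarith
  have hw1repos : 1 - R ≤ (1 - z ^ (t:ℂ)).re := by
    rw [hw1re]
    have := mul_le_mul_of_nonneg_left (Real.cos_le_one (φ * t)) hR0.le
    linarith
  have habsw1 : 1 - R ≤ ‖1 - z ^ (t:ℂ)‖ :=
    le_trans hw1repos (Complex.re_le_norm _)
  have harg2 : |Complex.arg (1 - z ^ (t:ℂ))| ≤
      π/2 * (|(1 - z ^ (t:ℂ)).im| / ‖1 - z ^ (t:ℂ)‖) := by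
    have h1 := jordan_aux (Complex.abs_arg_le_pi_div_two_iff.2
      (by linarith : 0 ≤ (1 - z ^ (t:ℂ)).re))
    rwa [Complex.sin_arg, abs_div, abs_norm] at h1
  have harg3 : |Complex.arg (1 - z ^ (t:ℂ))| * (1 - R) ≤ π/2 * (R * (t * |φ|)) := by
    have hd : |(1 - z ^ (t:ℂ)).im| / ‖1 - z ^ (t:ℂ)‖ ≤
        |(1 - z ^ (t:ℂ)).im| / (1 - R) :=
      div_le_div_of_nonneg_left (abs_nonneg _) h1R habsw1
    have hsint : |Real.sin (φ * t)| ≤ t * |φ| := by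
      calc |Real.sin (φ * t)| ≤ |φ * t| := abs_sin_le_aux _
        _ = t * |φ| := by rw [abs_mul, abs_of_pos ht0]; ring
    have h5 : |Complex.arg (1 - z ^ (t:ℂ))| ≤ π/2 * (|(1 - z ^ (t:ℂ)).im| / (1 - R)) :=
      le_trans harg2 (mul_le_mul_of_nonneg_left hd (by positivity))
    rw [hw1im] at h5
    calc |Complex.arg (1 - z ^ (t:ℂ))| * (1 - R)
        ≤ (π/2 * (R * |Real.sin (φ * t)| / (1 - R))) * (1 - R) := by
          apply mul_le_mul_of_nonneg_right _ h1R.le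
          rw [mul_div_assoc] at h5 ⊢
          exact h5
      _ = π/2 * (R * |Real.sin (φ * t)|) := by field_simp
      _ ≤ π/2 * (R * (t * |φ|)) :=
          mul_le_mul_of_nonneg_left
            (mul_le_mul_of_nonneg_left hsint hR0.le)
            (by positivity)
  have ha4 : R * (t * s) ≤ 1 - R := by
    have hx : R = Real.exp (-(t*s)) := by
      rw [hRdef]; congr 1; rw [hsdef]; ring
    have hprod : Real.exp (-(t*s)) * Real.exp (t*s) = 1 := by
      rw [← Real.exp_add]; simp
    rw [hx]
    linarith [mul_le_mul_of_nonneg_left (Real.add_one_le_exp (t*s))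
      (Real.exp_pos (-(t*s))).le, hprod]
  have hmain : |Complex.arg (1 - z ^ (t:ℂ))| * s ≤ π/2 * |φ| := by
    have h6 : R * (t * |φ|) * s ≤ (1 - R) * |φ| := by
      have h := mul_le_mul_of_nonneg_right ha4 (abs_nonneg φ)
      linarith [h]
    have h7 := mul_le_mul_of_nonneg_right harg3 hs0.le
    have h8 : |Complex.arg (1 - z ^ (t:ℂ))| * s * (1 - R) ≤ (π/2 * |φ|) * (1 - R) := by
      have h6' := mul_le_mul_of_nonneg_left h6 (by positivity : (0:ℝ) ≤ π/2)
      linarith [h7, h6']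
    exact le_of_mul_le_mul_right h8 h1R
  have hargnn : 0 ≤ |Complex.arg (1 - z ^ (t:ℂ))| := abs_nonneg _
  by_cases hcase : 1 / E ≤ s
  · -- small r case : s ≥ 1/E
    have hsE : 1 ≤ s * E := by
      rw [div_le_iff₀ hE0] at hcase; linarith
    have h9 : |Complex.arg (1 - z ^ (t:ℂ))| ≤ |Complex.arg (1 - z ^ (t:ℂ))| * (s * E) := by
      nth_rewrite 1 [← mul_one (|Complex.arg (1 - z ^ (t:ℂ))|)]
      exact mul_le_mul_of_nonneg_left hsE hargnn
    have h10 : |Complex.arg (1 - z ^ (t:ℂ))| * (s * E) ≤ (π/2 * |φ|) * E := by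
      have h := mul_le_mul_of_nonneg_right hmain hE0.le
      linarith [h]
    have h11 : (π/2 * |φ|) * E < (π/2 * θ) * E :=
      mul_lt_mul_of_pos_right ((mul_lt_mul_iff_right₀ (by positivity : (0:ℝ) < π/2)).2 hφθ) hE0
    have hA4 : (π/2 * θ) * E ≤ (π/2 * θ) * (ε/2) :=
      mul_le_mul_of_nonneg_left hEε (by positivity)
    have hfin : (π/2 * θ) * (ε/2) < ε * θ := by
      have hp : π * (θ * ε) < 3.15 * (θ * ε) :=
        (mul_lt_mul_iff_left₀ (mul_pos hθ0 hε)).2 hπ4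
      linarith [hp, mul_pos hθ0 hε]
    exact lt_of_le_of_lt (h9.trans h10) ((h11.trans_le hA4).trans hfin)
  · push_neg at hcase
    have hrE : 1 ≤ r * Real.exp (1/E) := by
      rw [hrexp, ← Real.exp_add]
      calc (1:ℝ) = Real.exp 0 := Real.exp_zero.symm
        _ ≤ Real.exp (-s + 1/E) := Real.exp_le_exp.2 (by linarith)
    have hφIm : |φ| * r ≤ π/2 * |z.im| := by
      have h1 := jordan_aux hφπ2
      rw [hsinφ] at h1
      calc |φ| * r ≤ (π/2 * (|z.im|/r)) * r := mul_le_mul_of_nonneg_right h1 hr0.le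
        _ = π/2 * |z.im| := by field_simp
    have h13 : |φ| ≤ |φ| * (r * Real.exp (1/E)) := by
      nth_rewrite 1 [← mul_one (|φ|)]
      exact mul_le_mul_of_nonneg_left hrE (abs_nonneg φ)
    have h14 : |φ| * (r * Real.exp (1/E)) ≤ (π/2 * |z.im|) * Real.exp (1/E) := by
      have h := mul_le_mul_of_nonneg_right hφIm (Real.exp_pos (1/E)).le
      linarith [h]
    have h15 : (π/2 * |z.im|) * Real.exp (1/E) < (π/2 * (4*(δ*θ)*s)) * Real.exp (1/E) :=
      mul_lt_mul_of_pos_right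
        ((mul_lt_mul_iff_right₀ (by positivity : (0:ℝ) < π/2)).2 hImz2) (Real.exp_pos _)
    have h16 : (π/2 * (4*(δ*θ)*s)) * Real.exp (1/E) = π/2 * 4 * θ * s * (E/8) := by
      have e : π/2 * (4*(δ*θ)*s) * Real.exp (1/E) =
          π/2 * 4 * θ * s * (Real.exp (1/E) * δ) := by ring
      rw [e, hδE]
    have h17 : |φ| < π * θ * s * E / 4 := by
      have := h13.trans_lt (h14.trans_lt h15)
      rw [h16] at this
      linarith
    have h18' : |Complex.arg (1 - z ^ (t:ℂ))| * s < (π^2 * θ * E / 8) * s := by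
      have h17' := mul_lt_mul_of_pos_left h17 (by positivity : (0:ℝ) < π/2)
      linarith [hmain, h17']
    have h19 : |Complex.arg (1 - z ^ (t:ℂ))| < π^2 * θ * E / 8 :=
      lt_of_mul_lt_mul_right h18' hs0.le
    have hππ : π^2 < 16 := by
      have h := mul_lt_mul'' hπ4 hπ4 hπ.le hπ.le
      have h2 : (3.15:ℝ) * 3.15 < 16 := by norm_num
      rw [pow_two]; linarith
    have hEb : π^2 * θ * E / 8 ≤ π^2 * θ * (ε/2) / 8 := by
      have := mul_le_mul_of_nonneg_left hEε (by positivity : (0:ℝ) ≤ π^2 * θ)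
      linarith
    have hfin : π^2 * θ * (ε/2) / 8 < ε * θ := by
      have hq : π^2 * (θ * ε) < 16 * (θ * ε) :=
        (mul_lt_mul_iff_left₀ (mul_pos hθ0 hε)).2 hππ
      linarith [hq, mul_pos hθ0 hε]
    linarith [h19, hEb, hfin]
end

section
/- For every odd integer ℓ ≥ 3, one has 2·R_ℓ·cos(θ_ℓ/ℓ²) > 2^{1/(ℓ−1)} + 2^{1/(ℓ²−ℓ)}. -/
open Real

lemma stmt15_chord (x : ℝ) (h0 : 0 ≤ x) (h2 : x ≤ 1/2) :
    (2:ℝ) ^ x ≤ 1 + 0.8285 * x := by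
  have h2x : (2:ℝ) ^ x = Real.exp (Real.log 2 * x) := Real.rpow_def_of_pos (by norm_num) x
  set u := Real.exp (Real.log 2 / 2) with hu
  have hu2 : u ^ 2 = 2 := by
    rw [hu, sq, ← Real.exp_add]
    rw [show Real.log 2 / 2 + Real.log 2 / 2 = Real.log 2 by ring]
    exact Real.exp_log (by norm_num)
  have hupos : 0 < u := Real.exp_pos _
  have hub : u ≤ 1.41422 := by nlinarith
  have hconv := convexOn_exp.2 (Set.mem_univ (0:ℝ)) (Set.mem_univ (Real.log 2 / 2))
      (show (0:ℝ) ≤ 1 - 2*x by linarith) (show (0:ℝ) ≤ 2*x by linarith)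
      (show (1 - 2*x) + 2*x = 1 by ring)
  simp only [smul_eq_mul, mul_zero, zero_add, Real.exp_zero, mul_one] at hconv
  rw [h2x, show Real.log 2 * x = (1-2*x)*0 + 2*x*(Real.log 2/2) by ring]
  calc Real.exp ((1-2*x)*0 + 2*x*(Real.log 2/2)) ≤ (1-2*x) + 2*x*u := by
        simpa using hconv
  _ ≤ 1 + 0.8285*x := by nlinarith

lemma stmt15_lb (y : ℝ) (hy : 0 ≤ y) :
    1 + y * Real.log 2 + (y * Real.log 2)^2/4 ≤ (2:ℝ) ^ y := by
  have hL : (0:ℝ) ≤ Real.log 2 := (Real.log_pos (by norm_num)).le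
  have h2y : (2:ℝ) ^ y = Real.exp (Real.log 2 * y) := Real.rpow_def_of_pos (by norm_num) y
  have h1 : 1 + Real.log 2 * y / 2 ≤ Real.exp (Real.log 2 * y / 2) := by
    linarith [Real.add_one_le_exp (Real.log 2 * y / 2)]
  have h0 : (0:ℝ) ≤ 1 + Real.log 2 * y / 2 := by positivity
  have hsq : Real.exp (Real.log 2 * y) = Real.exp (Real.log 2 * y / 2) ^ 2 := by
    rw [sq, ← Real.exp_add]; ring_nf
  rw [h2y, hsq]
  nlinarith [h1, h0]

lemma stmt15_poly1 (n : ℝ) (hn3 : 3 ≤ n) (hn0 : 0 < n) :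
    9.9225*(n^3*((n+1)^2+2)) ≤ 8*(n^3-1)^2 := by
  have hm : (0:ℝ) ≤ n - 3 := by linarith
  have h5 : 0 ≤ (n-3)*n^5 := mul_nonneg hm (by positivity)
  have h4 : 0 ≤ (n-3)*n^4 := mul_nonneg hm (by positivity)
  have h3 : 0 ≤ (n-3)*n^3 := mul_nonneg hm (by positivity)
  have h0 : (0:ℝ) ≤ n^3 := by positivity
  nlinarith [h5, h4, h3, h0]

lemma stmt15_poly2 (n : ℝ) (hn3 : 3 ≤ n) (hn0 : 0 < n) :
    0.8285*((n+1)*(n^2*(2*n+1))) + 1.4143*((n-1)*(2*n+1)) <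
      2.7724*n^4 + 0.2401*(n*(2*n^2-n-1)) := by
  have hm : (0:ℝ) ≤ n - 3 := by linarith
  have h3 : 0 ≤ (n-3)*n^3 := mul_nonneg hm (by positivity)
  have h2 : 0 ≤ (n-3)*n^2 := mul_nonneg hm (by positivity)
  have h1 : 0 ≤ (n-3)*n := mul_nonneg hm hn0.le
  nlinarith [h3, h2, h1, hn0]

set_option maxHeartbeats 4000000 in
theorem stmt15 (ℓ : ℕ) (h3 : 3 ≤ ℓ) (hodd : Odd ℓ) (R : ℝ) (hR : 1 < R)
    (hReq : R ^ (2 * ℓ) =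
      R ^ 2 + R ^ ((2 : ℝ) / (ℓ : ℝ)) +
        2 * R ^ ((1 : ℝ) + 1 / (ℓ : ℝ)) *
          Real.cos (Real.pi * ((ℓ : ℝ) + 1) / (2 * ((ℓ : ℝ) ^ 3 - 1))) ) :
    (2 : ℝ) ^ ((1 : ℝ) / ((ℓ : ℝ) - 1)) + (2 : ℝ) ^ ((1 : ℝ) / ((ℓ : ℝ) ^ 2 - ℓ)) <
      2 * R * Real.cos ((Real.pi * (ℓ : ℝ) ^ 2 / (2 * ((ℓ : ℝ) ^ 3 - 1))) / (ℓ : ℝ) ^ 2) := by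
  have hn3 : (3:ℝ) ≤ (ℓ:ℝ) := by exact_mod_cast h3
  set n : ℝ := (ℓ:ℝ) with hn
  clear_value n
  have hn0 : (0:ℝ) < n := by linarith
  have hn1 : (1:ℝ) < n := by linarith
  have hR0 : (0:ℝ) < R := lt_trans one_pos hR
  have hcube : (27:ℝ) ≤ n^3 := by
    nlinarith [mul_nonneg (mul_nonneg (sub_nonneg.2 hn3) hn0.le) hn0.le,
      mul_nonneg (sub_nonneg.2 hn3) hn0.le]
  have hd : (0:ℝ) < n^3 - 1 := by linarith
  have hπ : Real.pi ≤ 3.15 := (Real.pi_lt_d2).le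
  have hπ0 : (0:ℝ) < Real.pi := Real.pi_pos
  set θ : ℝ := Real.pi * (n+1) / (2*(n^3-1)) with hθdef
  clear_value θ
  have hθ0 : 0 < θ := by rw [hθdef]; positivity
  have hθ_le : θ ≤ 1/4 := by
    rw [hθdef, div_le_iff₀ (by linarith)]
    have hππ : Real.pi * (n+1) ≤ 3.15*(n+1) :=
      mul_le_mul_of_nonneg_right hπ (by linarith)
    nlinarith [mul_nonneg (mul_nonneg (sub_nonneg.2 hn3) hn0.le) hn0.le,
      mul_nonneg (sub_nonneg.2 hn3) hn0.le]
  have hφeq : (Real.pi * n^2 / (2*(n^3-1))) / n^2 = Real.pi / (2*(n^3-1)) := by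
    field_simp
  rw [hφeq]
  set φ : ℝ := Real.pi / (2*(n^3-1)) with hφdef
  clear_value φ
  have hφ0 : 0 < φ := by rw [hφdef]; positivity
  have hφ_le : φ ≤ 1/4 := by
    rw [hφdef, div_le_iff₀ (by linarith)]; linarith [hπ, hcube]
  -- AM-GM
  have hv : R ^ ((2:ℝ)/n) = (R ^ ((1:ℝ)/n))^2 := by
    rw [← Real.rpow_natCast (R ^ ((1:ℝ)/n)) 2, ← Real.rpow_mul hR0.le]
    congr 1
    push_cast
    ring
  have huv : R ^ ((1:ℝ) + 1/n) = R * R ^ ((1:ℝ)/n) := by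
    rw [Real.rpow_add hR0, Real.rpow_one]
  have hAM : 2 * R ^ ((1:ℝ)+1/n) ≤ R^2 + R ^ ((2:ℝ)/n) := by
    rw [hv, huv]; nlinarith [sq_nonneg (R - R ^ ((1:ℝ)/n))]
  have hcosθ : 1 - θ^2/2 ≤ Real.cos θ := Real.one_sub_sq_div_two_le_cos
  have hP0 : (0:ℝ) < R ^ ((1:ℝ)+1/n) := Real.rpow_pos_of_pos hR0 _
  have hKey : (4 - θ^2) * R ^ ((1:ℝ)+1/n) ≤ R ^ (2*ℓ) := by
    rw [hReq]
    nlinarith [mul_le_mul_of_nonneg_left hcosθ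
      (by positivity : (0:ℝ) ≤ 2 * R ^ ((1:ℝ)+1/n))]
  -- exponent E
  set E : ℝ := 2*n - (1 + 1/n) with hEdef
  clear_value E
  have h13 : 1/n ≤ 1/3 := by
    rw [div_le_div_iff₀ hn0 (by norm_num : (0:ℝ) < 3)]; linarith
  have hn_inv_pos : (0:ℝ) < 1/n := by positivity
  have hE4 : 4 ≤ E := by rw [hEdef]; linarith
  have hE0 : (0:ℝ) < E := by linarith
  have hRE : 4 - θ^2 ≤ R ^ E := by
    have h2l : R ^ (2*ℓ) = R ^ E * R ^ ((1:ℝ)+1/n) := by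
      rw [← Real.rpow_natCast R (2*ℓ), ← Real.rpow_add hR0]
      congr 1
      rw [hEdef, hn]
      push_cast
      ring
    rw [h2l] at hKey
    exact le_of_mul_le_mul_right hKey hP0
  have h4θ0 : (0:ℝ) < 4 - θ^2 := by nlinarith [hθ_le, hθ0]
  have hRlb : (4 - θ^2) ^ ((1:ℝ)/E) ≤ R := by
    calc (4-θ^2) ^ ((1:ℝ)/E) ≤ (R ^ E) ^ ((1:ℝ)/E) :=
          Real.rpow_le_rpow h4θ0.le hRE (by positivity)
    _ = R := by
          rw [← Real.rpow_mul hR0.le, mul_one_div, div_self hE0.ne', Real.rpow_one]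
  -- split and Bernoulli-type bound
  set s : ℝ := 2/E with hsdef
  clear_value s
  have hs0 : (0:ℝ) < s := by rw [hsdef]; positivity
  have hs12 : s ≤ 1/2 := by
    rw [hsdef, div_le_div_iff₀ hE0 (by norm_num : (0:ℝ) < 2)]; linarith
  have hθ4 : (0:ℝ) < 1 - θ^2/4 := by nlinarith [hθ_le, hθ0]
  have h4rpow : (4:ℝ) ^ ((1:ℝ)/E) = (2:ℝ)^s := by
    have h4 : (4:ℝ) = (2:ℝ) ^ (2:ℝ) := by
      rw [show (2:ℝ) = ((2:ℕ):ℝ) by norm_num, Real.rpow_natCast]; norm_num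
    rw [h4, ← Real.rpow_mul (by norm_num : (0:ℝ) ≤ 2), hsdef]
    congr 1
    ring
  have hsplit : (4 - θ^2:ℝ) ^ ((1:ℝ)/E) = (2:ℝ)^s * (1 - θ^2/4) ^ ((1:ℝ)/E) := by
    rw [show (4 - θ^2 : ℝ) = 4 * (1 - θ^2/4) by ring,
      Real.mul_rpow (by norm_num) hθ4.le, h4rpow]
  have hBern : (1 - θ^2/4) ≤ (1 - θ^2/4) ^ ((1:ℝ)/E) := by
    have h := Real.rpow_le_rpow_of_exponent_ge hθ4 (by nlinarith [hθ0] : (1:ℝ) - θ^2/4 ≤ 1)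
      (show (1:ℝ)/E ≤ 1 by rw [div_le_one hE0]; linarith)
    rwa [Real.rpow_one] at h
  set A : ℝ := (2:ℝ)^s with hAdef
  clear_value A
  have hA0 : (0:ℝ) < A := by
    rw [hAdef]; exact Real.rpow_pos_of_pos (by norm_num) s
  have hR_lb : A * (1 - θ^2/4) ≤ R := by
    calc A * (1 - θ^2/4) ≤ A * (1-θ^2/4)^((1:ℝ)/E) :=
          mul_le_mul_of_nonneg_left hBern hA0.le
    _ = (4-θ^2)^((1:ℝ)/E) := hsplit.symm
    _ ≤ R := hRlb
  -- cos φ chain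
  have hcosφ : 1 - φ^2/2 ≤ Real.cos φ := Real.one_sub_sq_div_two_le_cos
  have hφ4 : (0:ℝ) < 1 - φ^2/2 := by nlinarith [hφ_le, hφ0]
  have hchain : 2 * (A * (1-θ^2/4)) * (1 - φ^2/2) ≤ 2 * R * Real.cos φ := by
    have h1 : 2 * (A * (1-θ^2/4)) * (1-φ^2/2) ≤ 2*R*(1-φ^2/2) :=
      mul_le_mul_of_nonneg_right (by linarith) hφ4.le
    have h2 : 2*R*(1-φ^2/2) ≤ 2*R*Real.cos φ :=
      mul_le_mul_of_nonneg_left hcosφ (by linarith)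
    linarith
  -- upper bounds for goal LHS
  have hden1 : (0:ℝ) < n^2-n := by
    linarith [mul_nonneg (sub_nonneg.2 hn3) hn0.le]
  have hub1 : (2:ℝ)^((1:ℝ)/(n-1)) ≤ 1 + 0.8285 * (1/(n-1)) := by
    apply stmt15_chord
    · exact div_nonneg (by norm_num) (by linarith)
    · rw [div_le_div_iff₀ (by linarith) (by norm_num : (0:ℝ) < 2)]; linarith
  have hub2 : (2:ℝ)^((1:ℝ)/(n^2-n)) ≤ 1 + 0.8285 * (1/(n^2-n)) := by
    apply stmt15_chord
    · exact div_nonneg (by norm_num) hden1.le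
    · rw [div_le_div_iff₀ hden1 (by norm_num : (0:ℝ) < 2)]
      linarith [mul_nonneg (sub_nonneg.2 (show (2:ℝ) ≤ n by linarith))
        (show (0:ℝ) ≤ n+1 by linarith)]
  have hxsum : 1/(n-1) + 1/(n^2-n) = (n+1)/(n^2-n) := by
    have h1 : (n-1) ≠ 0 := ne_of_gt (by linarith)
    have h2 : n ≠ 0 := ne_of_gt hn0
    field_simp
  -- log 2 bounds
  have hLlb : (0.6931:ℝ) ≤ Real.log 2 := by linarith [Real.log_two_gt_d9]
  have hLub : Real.log 2 ≤ 0.6932 := by linarith [Real.log_two_lt_d9]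
  have hL0 : (0:ℝ) < Real.log 2 := by linarith
  have h2s : 1 + s*Real.log 2 + (s*Real.log 2)^2/4 ≤ A := by
    rw [hAdef]; exact stmt15_lb s hs0.le
  have hAub : A ≤ 1.41425 := by
    have h := stmt15_chord s hs0.le hs12
    rw [← hAdef] at h
    linarith [h, hs12]
  -- s value
  have hD3 : (0:ℝ) < 2*n^2 - n - 1 := by
    linarith [mul_nonneg (sub_nonneg.2 hn3) hn0.le]
  have hsval : s = 2*n/(2*n^2-n-1) := by
    rw [hsdef, hEdef]
    rw [div_eq_div_iff (hEdef ▸ hE0.ne') hD3.ne']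
    field_simp
    ring
  have hs_n : 1/n ≤ s := by
    rw [hsval, div_le_div_iff₀ hn0 hD3]
    linarith [mul_nonneg (sub_nonneg.2 hn3) hn0.le]
  -- q bound
  have hLHSeq : θ^2/4 + φ^2/2 = (Real.pi^2*((n+1)^2+2)) / (16*(n^3-1)^2) := by
    rw [hθdef, hφdef]
    field_simp
    ring
  have hπ2 : Real.pi^2 ≤ 9.9225 := by
    have h := pow_le_pow_left₀ hπ0.le hπ 2
    norm_num at h
    exact h.trans_eq (by norm_num)
  have hq : θ^2/4 + φ^2/2 ≤ 1/(2*n^3) := by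
    rw [hLHSeq, div_le_div_iff₀ (by positivity) (by positivity)]
    have hpoly := stmt15_poly1 n hn3 hn0
    linarith [hpoly, mul_le_mul_of_nonneg_right hπ2
      (show (0:ℝ) ≤ ((n+1)^2+2)*(2*n^3) by positivity)]
  have hq0 : (0:ℝ) ≤ θ^2/4 + φ^2/2 := by positivity
  -- penalty bound
  have h2Aq : 2*A*(θ^2/4+φ^2/2) ≤ 1.4143/n^3 := by
    have h1 : A*(θ^2/4+φ^2/2) ≤ 1.41425*(1/(2*n^3)) :=
      mul_le_mul hAub hq hq0 (by norm_num)
    have h2 : (2:ℝ)*(1.41425*(1/(2*n^3))) = 1.41425/n^3 := by ring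
    have h3 : (1.41425:ℝ)/n^3 ≤ 1.4143/n^3 := by
      apply div_le_div_of_nonneg_right (by norm_num) (by positivity)
    linarith
  -- product bound
  have hprod : 1 - (θ^2/4+φ^2/2) ≤ (1-θ^2/4)*(1-φ^2/2) := by linarith [sq_nonneg (θ*φ)]
  have hprod2 : 2*A*(1-(θ^2/4+φ^2/2)) ≤ 2*(A*(1-θ^2/4))*(1-φ^2/2) := by
    have h := mul_le_mul_of_nonneg_left hprod (by linarith : (0:ℝ) ≤ 2*A)
    linarith [h]
  -- lower bounds on the exponential terms
  have hsL1 : 2.7724*(n/(2*n^2-n-1)) ≤ 2*(s*Real.log 2) := by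
    have h1 : 1.3862*s ≤ 2*(s*Real.log 2) := by
      linarith [mul_nonneg (show (0:ℝ) ≤ Real.log 2 - 0.6931 by linarith) hs0.le]
    have h2 : 2.7724*(n/(2*n^2-n-1)) = 1.3862*(2*n/(2*n^2-n-1)) := by ring
    rw [h2, ← hsval]; linarith
  have hsL2 : 0.4802/n^2 ≤ (s*Real.log 2)^2 := by
    have h1 : 0.6931/n ≤ s*Real.log 2 := by
      calc (0.6931:ℝ)/n = (1/n)*0.6931 := by ring
      _ ≤ s*Real.log 2 := mul_le_mul hs_n hLlb (by norm_num) hs0.le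
    have h2 : (0.6931/n)^2 ≤ (s*Real.log 2)^2 := by
      apply pow_le_pow_left₀ (by positivity) h1
    have h3 : (0.4802:ℝ)/n^2 ≤ (0.6931/n)^2 := by
      rw [div_pow]
      apply div_le_div_of_nonneg_right (by norm_num) (by positivity)
    linarith
  -- main polynomial inequality
  have main : 0.8285*((n+1)/(n^2-n)) + 1.4143/n^3 <
      2.7724*(n/(2*n^2-n-1)) + 0.4802/n^2/2 := by
    have key := stmt15_poly2 n hn3 hn0
    have hfl : 0.8285*((n+1)/(n^2-n)) + 1.4143/n^3 =
        (0.8285*(n+1)*n^3 + 1.4143*(n^2-n)) / ((n^2-n)*n^3) := by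
      rw [eq_div_iff (mul_pos hden1 (by positivity)).ne']
      have e1 : (n+1)/(n^2-n) * (n^2-n) = n+1 := div_mul_cancel₀ _ hden1.ne'
      have e2 : (1.4143:ℝ)/n^3 * n^3 = 1.4143 := div_mul_cancel₀ _ (by positivity)
      linear_combination (0.8285*n^3) * e1 + (n^2-n) * e2
    have hfr : 2.7724*(n/(2*n^2-n-1)) + 0.4802/n^2/2 =
        (2.7724*n*n^2 + 0.2401*(2*n^2-n-1)) / ((2*n^2-n-1)*n^2) := by
      rw [eq_div_iff (mul_pos hD3 (by positivity)).ne']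
      have e1 : n/(2*n^2-n-1) * (2*n^2-n-1) = n := div_mul_cancel₀ _ hD3.ne'
      have e2 : (0.4802:ℝ)/n^2 * n^2 = 0.4802 := div_mul_cancel₀ _ (by positivity)
      linear_combination (2.7724*n^2) * e1 + ((2*n^2-n-1)/2) * e2
    rw [hfl, hfr, div_lt_div_iff₀ (by positivity) (by positivity)]
    have hmul : (0:ℝ) < n^3*(n-1) := by
      apply mul_pos (by positivity); linarith
    linarith [mul_lt_mul_of_pos_left key hmul]
  -- assemble
  have hA2 : 2 + 2*(s*Real.log 2) + (s*Real.log 2)^2/2 ≤ 2*A := by linarith [h2s]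
  have hgoalRHS : 2 + 2.7724*(n/(2*n^2-n-1)) + 0.4802/n^2/2 - 1.4143/n^3 ≤
      2 * R * Real.cos φ := by
    have h1 : 2 + 2.7724*(n/(2*n^2-n-1)) + 0.4802/n^2/2 - 1.4143/n^3 ≤
        2*A - 2*A*(θ^2/4+φ^2/2) := by
      have e1 : 0.4802/n^2/2 ≤ (s*Real.log 2)^2/2 := by linarith
      linarith [hsL1, e1, h2Aq, hA2]
    have h2 : 2*A - 2*A*(θ^2/4+φ^2/2) = 2*A*(1-(θ^2/4+φ^2/2)) := by ring
    linarith [hprod2, hchain]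
  have hLHS : (2:ℝ)^((1:ℝ)/(n-1)) + (2:ℝ)^((1:ℝ)/(n^2-n)) ≤
      2 + 0.8285*((n+1)/(n^2-n)) := by
    linarith [hub1, hub2, hxsum]
  linarith [main, hgoalRHS, hLHS]
end

section
/- For every odd integer ℓ ≥ 3 and R = R_ℓ, one has R^ℓ > R + 1; in particular R^ℓ > 2. -/
set_option maxHeartbeats 800000

theorem stmt16 (ℓ : ℕ) (h3 : 3 ≤ ℓ) (hodd : Odd ℓ) (R : ℝ) (hR : 1 < R)
    (hReq : R ^ (2 * ℓ) =
      R ^ 2 + R ^ ((2 : ℝ) / (ℓ : ℝ)) +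
        2 * R ^ ((1 : ℝ) + 1 / (ℓ : ℝ)) *
          Real.cos (Real.pi * ((ℓ : ℝ) + 1) / (2 * ((ℓ : ℝ) ^ 3 - 1))) ) :
    R + 1 < R ^ ℓ ∧ (2 : ℝ) < R ^ ℓ := by
  have hR0 : (0:ℝ) < R := by linarith
  have hL : (3:ℝ) ≤ (ℓ:ℝ) := by exact_mod_cast h3
  set L : ℝ := (ℓ:ℝ) with hLdef
  have hL0 : (0:ℝ) < L := by linarith
  set θ : ℝ := Real.pi * (L + 1) / (2 * (L ^ 3 - 1)) with hθdef
  have hpi : Real.pi < 3.15 := by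
    have := Real.pi_lt_d2
    linarith
  have hpi0 : 0 < Real.pi := Real.pi_pos
  have h27 : (27:ℝ) ≤ L ^ 3 := by
    nlinarith [pow_le_pow_left₀ (show (0:ℝ) ≤ 3 by norm_num) hL 3]
  have hden : (0:ℝ) < L ^ 3 - 1 := by linarith
  have hθpos : 0 < θ := by
    rw [hθdef]
    positivity
  -- θ ≤ 7/(3 L²)
  have hθle : θ * (3 * L ^ 2) ≤ 7 := by
    rw [hθdef, div_mul_eq_mul_div, div_le_iff₀ (by linarith)]
    nlinarith [sq_nonneg L, hL, hpi, hpi0]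
  have hL2 : (9:ℝ) ≤ L ^ 2 := by nlinarith
  have hθ1 : θ ≤ 7 / 27 := by
    nlinarith [mul_nonneg (show (0:ℝ) ≤ L^2 - 9 by linarith) hθpos.le]
  have hcoslb : 1 - θ ^ 2 / 2 ≤ Real.cos θ := Real.one_sub_sq_div_two_le_cos
  have hcos1 : Real.cos θ ≤ 1 := Real.cos_le_one θ
  -- s = R^(1/L)
  set s : ℝ := R ^ ((1:ℝ)/L) with hsdef
  have hs1 : 1 < s := by
    rw [hsdef]
    exact (Real.one_lt_rpow_iff_of_pos hR0).mpr (Or.inl ⟨hR, by positivity⟩)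
  have hLne : L ≠ 0 := ne_of_gt hL0
  have hsR : s ^ ℓ = R := by
    rw [hsdef, ← Real.rpow_natCast (R ^ ((1:ℝ)/L)) ℓ, ← Real.rpow_mul hR0.le]
    rw [show (1:ℝ)/L * (ℓ:ℝ) = 1 by field_simp; exact hLdef.symm]
    exact Real.rpow_one R
  have e2 : R ^ ((2:ℝ)/L) = s ^ 2 := by
    rw [hsdef, ← Real.rpow_natCast (R ^ ((1:ℝ)/L)) 2, ← Real.rpow_mul hR0.le]
    congr 1
    push_cast
    field_simp
  have e3 : R ^ ((1:ℝ) + 1/L) = s ^ (ℓ + 1) := by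
    rw [hsdef, ← Real.rpow_natCast (R ^ ((1:ℝ)/L)) (ℓ+1), ← Real.rpow_mul hR0.le]
    congr 1
    push_cast
    field_simp
    rw [hLdef]
  have e4 : s ^ (ℓ + 1) = R * s := by
    rw [pow_succ, hsR]
  have hsle : s ≤ R := by
    have h1 : R ^ ((1:ℝ)/L) ≤ R ^ (1:ℝ) :=
      Real.rpow_le_rpow_of_exponent_le hR.le (by rw [div_le_one hL0]; linarith)
    rw [Real.rpow_one] at h1
    exact h1
  have hs0 : (0:ℝ) < s := by linarith
  have hReq' : R ^ (2*ℓ) = R ^ 2 + s ^ 2 + 2 * (R * s) * Real.cos θ := by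
    rw [hReq, e2, e3, e4]
  -- R^2 ≤ 2
  have hup : R ^ (2*ℓ) ≤ 4 * R ^ 2 := by
    have h1 : s ^ 2 ≤ R ^ 2 := by nlinarith
    have h2 : R * s ≤ R ^ 2 := by nlinarith
    have h3' : 2 * (R*s) * Real.cos θ ≤ 2 * R^2 := by
      have h4 : 2 * (R*s) * Real.cos θ ≤ 2 * (R*s) * 1 :=
        mul_le_mul_of_nonneg_left hcos1 (by positivity)
      nlinarith
    linarith [hReq', h1]
  have hpow6 : R ^ 6 ≤ R ^ (2*ℓ) := pow_le_pow_right₀ hR.le (by omega)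
  have hR6 : R ^ 6 = (R^2)^3 := by ring
  have hR2 : R ^ 2 ≤ 2 := by
    by_contra h
    push_neg at h
    have h4 : 4 * R^2 < (R^2)^3 := by
      nlinarith [mul_pos (mul_pos (show (0:ℝ) < R^2 by positivity) (show (0:ℝ) < R^2 - 2 by linarith)) (show (0:ℝ) < R^2 + 2 by positivity)]
    linarith [hpow6, hup, hR6.ge, hR6.le]
  clear_value L θ s
  -- lower bound R^(2ℓ) ≥ 4 - θ²
  have hcospos : (0:ℝ) < Real.cos θ := by nlinarith
  have hlow : 4 - θ ^ 2 ≤ R ^ (2*ℓ) := by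
    have h1 : (1:ℝ) ≤ R * s := by nlinarith
    have h2 : 2 * Real.cos θ ≤ 2 * (R*s) * Real.cos θ := by nlinarith
    nlinarith [hReq']
  have hθθ : θ * θ ≤ 49 / 729 := by
    have := mul_le_mul hθ1 hθ1 hθpos.le (by norm_num : (0:ℝ) ≤ 7/27)
    linarith
  -- key : θ²/2 < s - 1
  have key : θ ^ 2 / 2 < s - 1 := by
    by_contra hc
    push_neg at hc
    set t : ℝ := s - 1 with htdef
    clear_value t
    have ht0 : 0 < t := by rw [htdef]; linarith
    have hL2θ : L ^ 2 * θ ^ 2 ≤ 49 / 81 := by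
      have h1 : θ * (3 * L ^ 2) * θ ≤ 7 * (7/27) :=
        mul_le_mul hθle hθ1 hθpos.le (by norm_num)
      linarith
    have hnt : 2 * L ^ 2 * t ≤ 49 / 81 := by
      have hprod := mul_le_mul_of_nonneg_left hc (show (0:ℝ) ≤ 2 * L ^ 2 by positivity)
      linarith
    set n : ℕ := ℓ * (2 * ℓ) with hndef
    have hcast : ((n:ℕ):ℝ) = 2 * L ^ 2 := by
      rw [hndef, hLdef]; push_cast; ring
    have hber : 1 - (n:ℝ) * t ≤ (1 - t) ^ n := by
      have := one_add_mul_le_pow (a := -t) (by linarith only [hc, hθθ] : (-2:ℝ) ≤ -t) n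
      calc 1 - (n:ℝ)*t = 1 + (n:ℝ) * (-t) := by ring
        _ ≤ (1 + (-t)) ^ n := this
        _ = (1 - t) ^ n := by ring_nf
    have ht1 : t ≤ 1 := by linarith only [hc, hθθ]
    have htt : t * t ≤ 1 * 1 := mul_le_mul ht1 ht1 ht0.le (by norm_num)
    have hfac : (1 - t) * (1 + t) = 1 - t * t := by ring
    have hone : ((1 - t) * (1 + t)) ^ n ≤ 1 := by
      apply pow_le_one₀
      · rw [hfac]; linarith only [htt]
      · rw [hfac]; linarith only [mul_pos ht0 ht0]
    have hsn : (1 + t) ^ n = R ^ (2*ℓ) := by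
      have h5 : (1:ℝ) + t = s := by rw [htdef]; ring
      rw [h5, hndef, pow_mul, hsR]
    have hRn : (0:ℝ) < R ^ (2*ℓ) := by positivity
    have hkey2 : R ^ (2*ℓ) * (1 - (n:ℝ)*t) ≤ 1 := by
      calc R ^ (2*ℓ) * (1 - (n:ℝ)*t) ≤ R ^ (2*ℓ) * (1-t)^n := by
            apply mul_le_mul_of_nonneg_left hber hRn.le
        _ = (1+t)^n * (1-t)^n := by rw [hsn]
        _ = ((1-t)*(1+t))^n := by rw [← mul_pow]; ring_nf
        _ ≤ 1 := hone
    have hntle : (n:ℝ) * t ≤ 49/81 := by rw [hcast]; linarith only [hnt]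
    have hmul := mul_le_mul_of_nonneg_left hntle hRn.le
    linarith only [hkey2, hmul, hlow, hθθ]
  -- final
  have hRs2 : R * s ≤ 2 := by
    have hm := mul_le_mul_of_nonneg_left hsle hR0.le
    linarith only [hm, hR2]
  have hmain : (R + 1) ^ 2 < R ^ (2*ℓ) := by
    have hAm := mul_le_mul_of_nonneg_left hcoslb (show (0:ℝ) ≤ 2*(R*s) by positivity)
    have hm1 := mul_le_mul_of_nonneg_right hRs2 (sq_nonneg θ)
    have hm2 : (0:ℝ) ≤ (R - 1) * (s - 1) :=
      mul_nonneg (by linarith) (by linarith)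
    linarith only [key, hm1, hm2, sq_nonneg (s-1), hAm, hReq', sq_nonneg θ]
  have hsq : (R ^ ℓ) ^ 2 = R ^ (2*ℓ) := by rw [← pow_mul, mul_comm]
  have hfin : R + 1 < R ^ ℓ := by
    have h2 : (R+1)^2 < (R^ℓ)^2 := by rw [hsq]; exact hmain
    exact lt_of_pow_lt_pow_left₀ 2 (by positivity) h2
  exact ⟨hfin, by linarith only [hfin, hR]⟩
end

section
/- There exists R* > 0 such that for every integer d ≥ 2 and every monic centered polynomial g ∈ ℂ[z] of degree d (i.e. g is monic and the coefficient of z^{d−1} vanishes), if every critical value of g lies in the closed disk of radius R* centered at 0 (i.e. |g(z)| ≤ R* whenever g′(z) = 0), then g^{−1}(B(0, 2R*)) ⊆ B(0, R*); that is, every z ∈ ℂ with |g(z)| < 2R* satisfies |z| < R*. -/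
open Polynomial Set Finset Metric Nat

namespace Stmt19aux

lemma prod_range_cast_factorial (n : ℕ) :
    ∏ j ∈ Finset.range n, ((j : ℝ) + 1) = (n ! : ℝ) := by
  induction n with
  | zero => simp
  | succ n ih =>
    rw [Finset.prod_range_succ, ih, Nat.factorial_succ]
    push_cast; ring

lemma pow_self_le_four_pow_mul_factorial (d : ℕ) : d ^ d ≤ 4 ^ d * d ! := by
  have key : d ^ d * d ! ≤ (4 ^ d * d !) * d ! := by
    have h1 : d ^ d * d ! ≤ (d + 1) ^ d * d ! :=
      Nat.mul_le_mul_right _ (Nat.pow_le_pow_left (by omega) d)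
    have h2 : (d + 1) ^ d * d ! ≤ (d + d)! := by
      rw [mul_comm]; exact Nat.factorial_mul_pow_le_factorial
    have h3 : (d + d)! = (2 * d).choose d * d ! * d ! := by
      have := Nat.choose_mul_factorial_mul_factorial (show d ≤ 2 * d by omega)
      rw [show 2 * d - d = d by omega] at this
      rw [show d + d = 2 * d by omega, ← this]
    have h4 : (2 * d).choose d ≤ 4 ^ d := by
      have hs : (2 * d).choose d ≤ ∑ k ∈ Finset.range (2 * d + 1), (2 * d).choose k :=
        Finset.single_le_sum (fun _ _ => Nat.zero_le _) (by simp; omega)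
      rw [Nat.sum_range_choose] at hs
      calc (2 * d).choose d ≤ 2 ^ (2 * d) := hs
        _ = 4 ^ d := by rw [pow_mul]; norm_num
    calc d ^ d * d ! ≤ (d + 1) ^ d * d ! := h1
      _ ≤ (d + d)! := h2
      _ = (2 * d).choose d * d ! * d ! := h3
      _ ≤ 4 ^ d * d ! * d ! :=
          Nat.mul_le_mul_right _ (Nat.mul_le_mul_right _ h4)
  exact Nat.le_of_mul_le_mul_right key (Nat.factorial_pos d)

/-- Chebyshev-type lower bound: a monic real polynomial of degree `d ≥ 1` takes a value of
absolute value at least `(L/8)^d` somewhere on any interval of length `L`. -/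
lemma cheb {d : ℕ} (hd : 1 ≤ d) (q : Polynomial ℝ) (hq : q.Monic) (hdeg : q.natDegree = d)
    (α L : ℝ) (hL : 0 < L) :
    ∃ x ∈ Set.Icc α (α + L), (L / 8) ^ d ≤ |q.eval x| := by
  by_contra hcon
  push_neg at hcon
  have hd0 : (0:ℝ) < d := by exact_mod_cast hd
  set h : ℝ := L / d with hh
  have hh0 : 0 < h := div_pos hL hd0
  set v : ℕ → ℝ := fun k => α + k * h with hv
  set s : Finset ℕ := Finset.range (d + 1) with hs
  have hinj : Set.InjOn v s := by
    intro i _ j _ hij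
    simp only [hv] at hij
    have h1 : (i : ℝ) * h = (j : ℝ) * h := by linarith
    have h2 : (i : ℝ) = j := mul_right_cancel₀ (ne_of_gt hh0) h1
    exact_mod_cast h2
  have hcards : s.card = d + 1 := Finset.card_range _
  have hdeg' : q.degree < s.card := by
    rw [hcards, degree_eq_natDegree hq.ne_zero, hdeg]
    exact_mod_cast Nat.lt_succ_self d
  have hinterp := Lagrange.eq_interpolate hinj hdeg'
  have hcoeffq : q.coeff d = 1 := by
    have := hq.coeff_natDegree
    rwa [hdeg] at this
  have hcoeffI : (Lagrange.interpolate s v fun i => q.eval (v i)).coeff d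
      = ∑ k ∈ s, q.eval (v k) * (Lagrange.basis s v k).coeff d := by
    rw [Lagrange.interpolate_apply, Polynomial.finset_sum_coeff]
    exact Finset.sum_congr rfl fun k _ => by rw [Polynomial.coeff_C_mul]
  have hbasis : ∀ k ∈ s, (Lagrange.basis s v k).coeff d
      = ∏ j ∈ s.erase k, (v k - v j)⁻¹ := by
    intro k hk
    have hnd : (Lagrange.basis s v k).natDegree = d := by
      rw [Lagrange.natDegree_basis hinj hk, hcards]; omega
    rw [← hnd]
    show (Lagrange.basis s v k).leadingCoeff = _
    rw [Lagrange.basis, Polynomial.leadingCoeff_prod]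
    refine Finset.prod_congr rfl fun j hj => ?_
    have hne : v k ≠ v j := by
      intro hEq
      exact (Finset.mem_erase.mp hj).1 (hinj (Finset.mem_of_mem_erase hj) hk hEq.symm)
    rw [Lagrange.basisDivisor, Polynomial.leadingCoeff_mul, Polynomial.leadingCoeff_C,
      Polynomial.leadingCoeff_X_sub_C, mul_one]
  have hone : (1:ℝ) = ∑ k ∈ s, q.eval (v k) * ∏ j ∈ s.erase k, (v k - v j)⁻¹ := by
    calc (1:ℝ) = q.coeff d := hcoeffq.symm
      _ = (Lagrange.interpolate s v fun i => q.eval (v i)).coeff d := by rw [← hinterp]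
      _ = ∑ k ∈ s, q.eval (v k) * (Lagrange.basis s v k).coeff d := hcoeffI
      _ = ∑ k ∈ s, q.eval (v k) * ∏ j ∈ s.erase k, (v k - v j)⁻¹ :=
          Finset.sum_congr rfl fun k hk => by rw [hbasis k hk]
  have hprodval : ∀ k ∈ s, ∏ j ∈ s.erase k, |v k - v j|
      = h ^ d * ((k ! : ℝ) * ((d - k)! : ℝ)) := by
    intro k hk
    have hfact : ∀ j : ℕ, |v k - v j| = h * |(k : ℝ) - j| := by
      intro j
      have hEq : v k - v j = ((k : ℝ) - j) * h := by simp only [hv]; ring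
      rw [hEq, abs_mul, abs_of_pos hh0, mul_comm]
    calc ∏ j ∈ s.erase k, |v k - v j| = ∏ j ∈ s.erase k, (h * |(k : ℝ) - j|) :=
          Finset.prod_congr rfl fun j _ => hfact j
      _ = h ^ (s.erase k).card * ∏ j ∈ s.erase k, |(k : ℝ) - j| := by
          rw [Finset.prod_mul_distrib, Finset.prod_const]
      _ = h ^ d * ∏ j ∈ s.erase k, |(k : ℝ) - j| := by
          rw [Finset.card_erase_of_mem hk, hcards]; norm_num
      _ = h ^ d * ((k ! : ℝ) * ((d - k)! : ℝ)) := by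
          congr 1
          have hsplit : s.erase k = Finset.range k ∪ Finset.Ico (k + 1) (d + 1) := by
            have hkd : k ≤ d := by
              have := Finset.mem_range.mp (hs ▸ hk); omega
            ext j
            simp only [hs, Finset.mem_erase, Finset.mem_range, Finset.mem_union, Finset.mem_Ico]
            omega
          have hdisj : Disjoint (Finset.range k) (Finset.Ico (k + 1) (d + 1)) := by
            rw [Finset.disjoint_left]
            intro j hj1 hj2
            simp only [Finset.mem_range] at hj1
            simp only [Finset.mem_Ico] at hj2
            omega
          rw [hsplit, Finset.prod_union hdisj]
          have e1 : ∏ j ∈ Finset.range k, |(k : ℝ) - j| = (k ! : ℝ) := by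
            have habs : ∀ j ∈ Finset.range k, |(k : ℝ) - j| = (k : ℝ) - j := by
              intro j hj
              have : (j : ℝ) < k := by exact_mod_cast Finset.mem_range.mp hj
              rw [abs_of_pos]; linarith
            rw [Finset.prod_congr rfl habs]
            rw [← Finset.prod_range_reflect (fun j => (k : ℝ) - j) k]
            have hre : ∀ j ∈ Finset.range k, (k : ℝ) - ((k - 1 - j : ℕ) : ℝ) = (j : ℝ) + 1 := by
              intro j hj
              have hjk := Finset.mem_range.mp hj
              have hc : ((k - 1 - j : ℕ) : ℝ) = (k : ℝ) - 1 - j := by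
                have h1 : j ≤ k - 1 := by omega
                have h2 : 1 ≤ k := by omega
                push_cast [Nat.cast_sub h1, Nat.cast_sub h2]
                ring
              rw [hc]; ring
            rw [Finset.prod_congr rfl hre, prod_range_cast_factorial]
          have e2 : ∏ j ∈ Finset.Ico (k + 1) (d + 1), |(k : ℝ) - j| = ((d - k)! : ℝ) := by
            rw [Finset.prod_Ico_eq_prod_range]
            have hc : d + 1 - (k + 1) = d - k := by omega
            rw [hc]
            have hre : ∀ j ∈ Finset.range (d - k),
                |(k : ℝ) - ((k + 1 + j : ℕ) : ℝ)| = (j : ℝ) + 1 := by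
              intro j _
              have hc2 : ((k + 1 + j : ℕ) : ℝ) = (k : ℝ) + 1 + j := by push_cast; ring
              rw [hc2, abs_of_neg (by linarith)]
              ring
            rw [Finset.prod_congr rfl hre, prod_range_cast_factorial]
          rw [e1, e2]
  have hwpos : ∀ k ∈ s, (0:ℝ) < ∏ j ∈ s.erase k, |v k - v j| := by
    intro k hk
    rw [hprodval k hk]
    have f1 : (0:ℝ) < (k ! : ℝ) := by exact_mod_cast Nat.factorial_pos k
    have f2 : (0:ℝ) < ((d - k)! : ℝ) := by exact_mod_cast Nat.factorial_pos (d - k)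
    positivity
  have hterm : ∀ k ∈ s, (∏ j ∈ s.erase k, |v k - v j|)⁻¹
      = (d.choose k : ℝ) / (h ^ d * (d ! : ℝ)) := by
    intro k hk
    have hkd : k ≤ d := by
      have := Finset.mem_range.mp (hs ▸ hk); omega
    have hch : (d.choose k : ℝ) * ((k ! : ℝ) * ((d - k)! : ℝ)) = (d ! : ℝ) := by
      exact_mod_cast congrArg (Nat.cast (R := ℝ))
        (by rw [← Nat.choose_mul_factorial_mul_factorial hkd]; ring)
    rw [hprodval k hk]
    have f1 : (0:ℝ) < (k ! : ℝ) := by exact_mod_cast Nat.factorial_pos k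
    have f2 : (0:ℝ) < ((d - k)! : ℝ) := by exact_mod_cast Nat.factorial_pos (d - k)
    have f3 : (0:ℝ) < (d ! : ℝ) := by exact_mod_cast Nat.factorial_pos d
    rw [eq_div_iff (by positivity), ← hch]
    field_simp
  have hsum_bound : ∑ k ∈ s, (∏ j ∈ s.erase k, |v k - v j|)⁻¹ ≤ (8 / L) ^ d := by
    rw [Finset.sum_congr rfl hterm, ← Finset.sum_div]
    have hchsum : ∑ k ∈ s, (d.choose k : ℝ) = 2 ^ d := by
      rw [hs]
      exact_mod_cast congrArg (Nat.cast (R := ℝ)) (Nat.sum_range_choose d)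
    rw [hchsum]
    have f3 : (0:ℝ) < (d ! : ℝ) := by exact_mod_cast Nat.factorial_pos d
    have hkey : (2:ℝ) ^ d * (d:ℝ) ^ d ≤ 8 ^ d * (d ! : ℝ) := by
      have hc : ((d:ℝ)) ^ d ≤ 4 ^ d * (d ! : ℝ) := by
        exact_mod_cast pow_self_le_four_pow_mul_factorial d
      calc (2:ℝ) ^ d * (d:ℝ) ^ d ≤ 2 ^ d * (4 ^ d * (d ! : ℝ)) := by
            have : (0:ℝ) < 2 ^ d := by positivity
            nlinarith
        _ = 8 ^ d * (d ! : ℝ) := by rw [← mul_assoc, ← mul_pow]; norm_num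
    have hhd : h ^ d = L ^ d / (d:ℝ) ^ d := by rw [hh, div_pow]
    rw [hhd, div_pow]
    rw [div_le_div_iff₀ (by positivity) (by positivity)]
    have hLd : (0:ℝ) < L ^ d := by positivity
    calc (2:ℝ) ^ d * L ^ d = (2 ^ d * (d:ℝ) ^ d) * (L ^ d / (d:ℝ) ^ d) := by
          field_simp
      _ ≤ (8 ^ d * (d ! : ℝ)) * (L ^ d / (d:ℝ) ^ d) := by
          have : (0:ℝ) < L ^ d / (d:ℝ) ^ d := by positivity
          nlinarith
      _ = 8 ^ d * (L ^ d / (d:ℝ) ^ d * (d ! : ℝ)) := by ring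
  -- contradiction
  have hmem : ∀ k ∈ s, v k ∈ Set.Icc α (α + L) := by
    intro k hk
    have hkd : k ≤ d := by
      have := Finset.mem_range.mp (hs ▸ hk); omega
    constructor
    · simp only [hv]
      have : (0:ℝ) ≤ (k:ℝ) * h := by positivity
      linarith
    · simp only [hv]
      have hkd' : (k:ℝ) ≤ d := by exact_mod_cast hkd
      have : (k:ℝ) * h ≤ d * h := by nlinarith
      have hdh : (d:ℝ) * h = L := by rw [hh]; field_simp
      linarith
  have habs : (1:ℝ) ≤ ∑ k ∈ s, |q.eval (v k)| * (∏ j ∈ s.erase k, |v k - v j|)⁻¹ := by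
    calc (1:ℝ) = |∑ k ∈ s, q.eval (v k) * ∏ j ∈ s.erase k, (v k - v j)⁻¹| := by
          rw [← hone]; norm_num
      _ ≤ ∑ k ∈ s, |q.eval (v k) * ∏ j ∈ s.erase k, (v k - v j)⁻¹| :=
          Finset.abs_sum_le_sum_abs _ _
      _ = ∑ k ∈ s, |q.eval (v k)| * (∏ j ∈ s.erase k, |v k - v j|)⁻¹ := by
          refine Finset.sum_congr rfl fun k hk => ?_
          rw [abs_mul, Finset.abs_prod]
          congr 1
          rw [← Finset.prod_inv_distrib]
          exact Finset.prod_congr rfl fun j _ => abs_inv _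
  have hlt : ∑ k ∈ s, |q.eval (v k)| * (∏ j ∈ s.erase k, |v k - v j|)⁻¹
      < ∑ k ∈ s, (L / 8) ^ d * (∏ j ∈ s.erase k, |v k - v j|)⁻¹ := by
    refine Finset.sum_lt_sum_of_nonempty ⟨0, by simp [hs]⟩ fun k hk => ?_
    have hw := hwpos k hk
    have hq := hcon (v k) (hmem k hk)
    exact mul_lt_mul_of_pos_right hq (by positivity)
  have hfin : ∑ k ∈ s, (L / 8) ^ d * (∏ j ∈ s.erase k, |v k - v j|)⁻¹ ≤ 1 := by
    rw [← Finset.mul_sum]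
    calc (L / 8) ^ d * ∑ k ∈ s, (∏ j ∈ s.erase k, |v k - v j|)⁻¹
        ≤ (L / 8) ^ d * (8 / L) ^ d := by
          have : (0:ℝ) < (L / 8) ^ d := by positivity
          nlinarith [hsum_bound]
      _ = 1 := by
          rw [← mul_pow]
          have : L / 8 * (8 / L) = 1 := by field_simp
          rw [this, one_pow]
  linarith

lemma norm_multiset_prod_c (s : Multiset ℂ) :
    ‖s.prod‖ = (s.map (fun x : ℂ => ‖x‖)).prod := by
  induction s using Multiset.induction_on with
  | empty => simp
  | cons a t ih => simp [norm_mul, ih]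

lemma abs_multiset_prod_r (s : Multiset ℝ) :
    |s.prod| = (s.map (fun x : ℝ => |x|)).prod := by
  induction s using Multiset.induction_on with
  | empty => simp
  | cons a t ih => simp [abs_mul, ih]

lemma multiset_prod_map_le {s : Multiset ℂ} (f g : ℂ → ℝ)
    (h0 : ∀ i ∈ s, 0 ≤ f i) (h : ∀ i ∈ s, f i ≤ g i) :
    (s.map f).prod ≤ (s.map g).prod := by
  induction s using Multiset.induction_on with
  | empty => simp
  | cons a t ih =>
    simp only [Multiset.map_cons, Multiset.prod_cons]
    have ha0 := h0 a (Multiset.mem_cons_self a t)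
    have ha := h a (Multiset.mem_cons_self a t)
    have ht0 : (0:ℝ) ≤ (t.map f).prod := by
      apply Multiset.prod_nonneg
      intro x hx
      obtain ⟨i, hi, rfl⟩ := Multiset.mem_map.mp hx
      exact h0 i (Multiset.mem_cons_of_mem hi)
    have htle := ih (fun i hi => h0 i (Multiset.mem_cons_of_mem hi))
      (fun i hi => h i (Multiset.mem_cons_of_mem hi))
    exact mul_le_mul ha htle ht0 (le_trans ha0 ha)

lemma multiset_sum_sub (s : Multiset ℂ) (z : ℂ) :
    (s.map (fun ζ => z - ζ)).sum = (Multiset.card s : ℂ) * z - s.sum := by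
  induction s using Multiset.induction_on with
  | empty => simp
  | cons a t ih =>
    simp only [Multiset.map_cons, Multiset.sum_cons, Multiset.card_cons, ih]
    push_cast
    ring

lemma bound_on_ball (f : ℂ → ℝ) (hf : Continuous f) (r : ℝ) (hr : 0 ≤ r) :
    ∃ M : ℝ, 0 < M ∧ ∀ z : ℂ, ‖z‖ ≤ r → f z ≤ M := by
  obtain ⟨y, _, hmax⟩ := (isCompact_closedBall (0:ℂ) r).exists_isMaxOn
    ⟨0, by simp [hr]⟩ hf.continuousOn
  refine ⟨|f y| + 1, by positivity, fun z hz => ?_⟩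
  have hz' : z ∈ closedBall (0:ℂ) r := by simpa [mem_closedBall, dist_eq_norm] using hz
  have h1 : f z ≤ f y := hmax hz'
  have h2 : f y ≤ |f y| := le_abs_self _
  linarith

set_option maxHeartbeats 2000000 in
/-- Descent lemma. -/
lemma connect {g : ℂ[X]} (hdeg : 1 ≤ g.natDegree) {S : ℝ} (hS : 1 ≤ S)
    (hcrit : ∀ z : ℂ, g.derivative.eval z = 0 → ‖g.eval z‖ ≤ S) (a b : ℂ)
    (hb : g.eval b = 0) :
    ∃ P : Set ℂ, IsPreconnected P ∧ a ∈ P ∧ b ∈ P ∧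
      ∀ z ∈ P, ‖g.eval z‖ ≤ max ‖g.eval a‖ (S + 2) := by
  have hgc : Continuous fun z : ℂ => g.eval z := g.continuous
  have hgc' : Continuous fun z : ℂ => g.derivative.eval z := g.derivative.continuous
  -- the max of ‖g‖ on the segment [a,b]
  have hsegcpt : IsCompact (segment ℝ a b) := by
    rw [segment_eq_image']
    exact isCompact_Icc.image (by continuity)
  obtain ⟨x₀, hx₀seg, hx₀⟩ :=
    hsegcpt.exists_isMaxOn ⟨a, left_mem_segment ℝ a b⟩ (hgc.norm.continuousOn)
  set T : ℝ := max ‖g.eval x₀‖ (S + 2) with hTdef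
  have hT2 : S + 2 ≤ T := le_max_right _ _
  have hT0 : 0 < T := by linarith
  have hseg_le : ∀ y ∈ segment ℝ a b, ‖g.eval y‖ ≤ T :=
    fun y hy => le_trans (hx₀ hy) (le_max_left _ _)
  have haT : ‖g.eval a‖ ≤ T := hseg_le a (left_mem_segment ℝ a b)
  -- radius ρ
  obtain ⟨ρ, hρ0, hρ⟩ : ∃ ρ : ℝ, 0 < ρ ∧ ∀ z : ℂ, ‖g.eval z‖ ≤ T → ‖z‖ ≤ ρ := by
    by_contra hcontra
    push_neg at hcontra
    have hzex : ∀ n : ℕ, ∃ z : ℂ, ‖g.eval z‖ ≤ T ∧ (n : ℝ) + 1 < ‖z‖ := by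
      intro n
      obtain ⟨z, hz1, hz2⟩ := hcontra ((n : ℝ) + 1) (by positivity)
      exact ⟨z, hz1, hz2⟩
    choose zf hzf1 hzf2 using hzex
    have htend : Filter.Tendsto (fun n : ℕ => ‖zf n‖) Filter.atTop Filter.atTop := by
      apply Filter.tendsto_atTop_mono (fun n => le_of_lt (hzf2 n))
      apply Filter.tendsto_atTop_add_const_right
      exact tendsto_natCast_atTop_atTop
    have hdegpos : 0 < g.degree := natDegree_pos_iff_degree_pos.mp (by omega)
    obtain ⟨n, hn⟩ := ((g.tendsto_norm_atTop hdegpos htend).eventually_gt_atTop T).exists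
    exact absurd (hzf1 n) (not_le.mpr hn)
  -- bounds on derivatives
  obtain ⟨M₂, hM₂0, hM₂⟩ := bound_on_ball (fun z => ‖g.derivative.derivative.eval z‖)
    g.derivative.derivative.continuous.norm (ρ + 1) (by linarith)
  obtain ⟨M₃, hM₃0, hM₃⟩ := bound_on_ball (fun z => ‖g.derivative.eval z‖)
    hgc'.norm (ρ + 1) (by linarith)
  -- lower bound m for ‖g'‖ on the high region
  obtain ⟨m, hm0, hm⟩ : ∃ m : ℝ, 0 < m ∧
      ∀ z : ℂ, ‖z‖ ≤ ρ → S + 1 ≤ ‖g.eval z‖ → m ≤ ‖g.derivative.eval z‖ := by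
    set K : Set ℂ := closedBall (0:ℂ) ρ ∩ {z : ℂ | S + 1 ≤ ‖g.eval z‖} with hKdef
    have hKclosed : IsClosed K :=
      Metric.isClosed_closedBall.inter (isClosed_le continuous_const hgc.norm)
    have hKcpt : IsCompact K :=
      (isCompact_closedBall (0:ℂ) ρ).of_isClosed_subset hKclosed inter_subset_left
    rcases K.eq_empty_or_nonempty with hKe | hKne
    · refine ⟨1, one_pos, fun z hz1 hz2 => ?_⟩
      exfalso
      have hzK : z ∈ K := ⟨by simpa [mem_closedBall, dist_eq_norm] using hz1, hz2⟩
      rw [hKe] at hzK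
      exact Set.notMem_empty z hzK
    · obtain ⟨y, hyK, hymin⟩ := hKcpt.exists_isMinOn hKne (hgc'.norm.continuousOn)
      have hy0 : 0 < ‖g.derivative.eval y‖ := by
        rcases eq_or_ne (g.derivative.eval y) 0 with h0 | h0
        · exfalso
          have h1 := hcrit y h0
          have h2 : S + 1 ≤ ‖g.eval y‖ := hyK.2
          linarith
        · exact norm_pos_iff.mpr h0
      refine ⟨_, hy0, fun z hz1 hz2 => ?_⟩
      exact hymin ⟨by simpa [mem_closedBall, dist_eq_norm] using hz1, hz2⟩
  -- constants
  set c : ℝ := min (min (1 / (2 * M₃ ^ 2)) (1 / (2 * M₂ * T))) (1 / (T * M₃)) with hcdef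
  have hc0 : 0 < c := lt_min (lt_min (by positivity) (by positivity)) (by positivity)
  have hc1 : c ≤ 1 / (2 * M₃ ^ 2) := le_trans (min_le_left _ _) (min_le_left _ _)
  have hc2 : c ≤ 1 / (2 * M₂ * T) := le_trans (min_le_left _ _) (min_le_right _ _)
  have hc3 : c ≤ 1 / (T * M₃) := min_le_right _ _
  set μ : ℝ := (S + 2) * (c * m ^ 2) / 2 with hμdef
  have hμ0 : 0 < μ := by positivity
  -- the descent map
  set ψ : ℂ → ℝ := fun z => max 0 (min 1 (‖g.eval z‖ - (S + 1))) with hψdef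
  have hψ0 : ∀ z, 0 ≤ ψ z := fun z => le_max_left _ _
  have hψ1 : ∀ z, ψ z ≤ 1 := fun z => max_le (by norm_num) (min_le_left _ _)
  have hψcont : Continuous ψ :=
    continuous_const.max (continuous_const.min (hgc.norm.sub continuous_const))
  set F : ℂ → ℂ := fun z =>
    z - ((c * ψ z : ℝ) : ℂ) * (g.eval z * (starRingEnd ℂ) (g.derivative.eval z)) with hFdef
  have hFcont : Continuous F := by
    apply continuous_id.sub
    exact (Complex.continuous_ofReal.comp (continuous_const.mul hψcont)).mul
      (hgc.mul (Complex.continuous_conj.comp hgc'))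
  -- key one-step estimate
  have key : ∀ w : ℂ, ‖g.eval w‖ ≤ T → ∀ s : ℝ, 0 ≤ s → s ≤ 1 →
      ‖g.eval (w + s • (F w - w))‖
        ≤ ‖g.eval w‖ - s * (c * ψ w) * ‖g.derivative.eval w‖ ^ 2 * ‖g.eval w‖ / 2 := by
    intro w hw s hs0 hs1
    set A := ‖g.eval w‖ with hAdef
    set B := ‖g.derivative.eval w‖ with hBdef
    have hA0 : 0 ≤ A := norm_nonneg _
    have hB0 : 0 ≤ B := norm_nonneg _
    have hAT : A ≤ T := hw
    have hwball : ‖w‖ ≤ ρ := hρ w hw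
    have hBM : B ≤ M₃ := hM₃ w (by linarith)
    set h : ℂ := F w - w with hhdef
    have hh : h = -(((c * ψ w : ℝ) : ℂ)
        * (g.eval w * (starRingEnd ℂ) (g.derivative.eval w))) := by
      rw [hhdef]
      simp only [hFdef]
      ring
    have hcψ0 : 0 ≤ c * ψ w := mul_nonneg (le_of_lt hc0) (hψ0 w)
    have hnormh : ‖h‖ = (c * ψ w) * (A * B) := by
      rw [hh, norm_neg, norm_mul, norm_mul, Complex.norm_real, Real.norm_eq_abs, abs_of_nonneg hcψ0,
        RCLike.norm_conj]
    have hsh : ‖s • h‖ = s * ((c * ψ w) * (A * B)) := by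
      rw [norm_smul, Real.norm_eq_abs, abs_of_nonneg hs0, hnormh]
    have hcTM : c * (T * M₃) ≤ 1 := by
      have := (le_div_iff₀ (by positivity : (0:ℝ) < T * M₃)).mp hc3
      linarith
    have hsh1 : ‖s • h‖ ≤ 1 := by
      have e1 : s * ((c * ψ w) * (A * B)) ≤ (c * ψ w) * (A * B) :=
        mul_le_of_le_one_left (by positivity) hs1
      have e2 : (c * ψ w) * (A * B) ≤ (c * ψ w) * (T * M₃) :=
        mul_le_mul_of_nonneg_left (mul_le_mul hAT hBM hB0 hT0.le) hcψ0
      have e3 : (c * ψ w) * (T * M₃) ≤ c * (T * M₃) := by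
        have hψc : c * ψ w ≤ c := by nlinarith [hψ1 w, hc0.le, hψ0 w]
        exact mul_le_mul_of_nonneg_right hψc (by positivity)
      rw [hsh]; linarith
    set z₁ : ℂ := w + s • h with hz₁def
    have hwball' : w ∈ closedBall (0:ℂ) (ρ + 1) := by
      simp only [mem_closedBall, dist_eq_norm, sub_zero]; linarith
    have hz₁ball : z₁ ∈ closedBall (0:ℂ) (ρ + 1) := by
      simp only [mem_closedBall, dist_eq_norm, sub_zero]
      calc ‖z₁‖ ≤ ‖w‖ + ‖s • h‖ := by rw [hz₁def]; exact norm_add_le _ _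
        _ ≤ ρ + 1 := by linarith
    have hzw : z₁ - w = s • h := by rw [hz₁def]; ring
    have hlip : ∀ y ∈ segment ℝ w z₁,
        ‖g.derivative.eval y - g.derivative.eval w‖ ≤ M₂ * ‖s • h‖ := by
      intro y hy
      have hyball : y ∈ closedBall (0:ℂ) (ρ + 1) :=
        (convex_closedBall (0:ℂ) (ρ + 1)).segment_subset hwball' hz₁ball hy
      have hbd := (convex_closedBall (0:ℂ) (ρ + 1)).norm_image_sub_le_of_norm_hasDerivWithin_le
        (f := fun z : ℂ => g.derivative.eval z)
        (f' := fun z : ℂ => g.derivative.derivative.eval z)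
        (fun x _ => (g.derivative.hasDerivAt x).hasDerivWithinAt)
        (fun x hx => hM₂ x (by simpa [mem_closedBall, dist_eq_norm] using hx))
        hwball' hyball
      have hyw : ‖y - w‖ ≤ ‖s • h‖ := by
        rw [segment_eq_image'] at hy
        obtain ⟨t, ht, rfl⟩ := hy
        rw [hzw]
        have hht : w + t • (s • h) - w = t • (s • h) := by ring
        rw [hht, norm_smul, Real.norm_eq_abs, abs_of_nonneg ht.1]
        nlinarith [norm_nonneg (s • h), ht.2, ht.1]
      calc ‖g.derivative.eval y - g.derivative.eval w‖ ≤ M₂ * ‖y - w‖ := hbd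
        _ ≤ M₂ * ‖s • h‖ := by nlinarith [hM₂0.le]
    have taylor : ‖g.eval z₁ - g.eval w - g.derivative.eval w * (z₁ - w)‖
        ≤ M₂ * ‖s • h‖ ^ 2 := by
      have hconv : Convex ℝ (segment ℝ w z₁) := convex_segment w z₁
      have hder : ∀ x ∈ segment ℝ w z₁,
          HasDerivWithinAt (fun z : ℂ => g.eval z - g.derivative.eval w * z)
            (g.derivative.eval x - g.derivative.eval w) (segment ℝ w z₁) x := by
        intro x _
        have h1 : HasDerivAt (fun z : ℂ => g.eval z) (g.derivative.eval x) x := g.hasDerivAt x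
        have h2 : HasDerivAt (fun z : ℂ => g.derivative.eval w * z)
            (g.derivative.eval w) x := by
          simpa using (hasDerivAt_id x).const_mul (g.derivative.eval w)
        exact (h1.sub h2).hasDerivWithinAt
      have hbd2 := Convex.norm_image_sub_le_of_norm_hasDerivWithin_le
        (s := segment ℝ w z₁) (C := M₂ * ‖s • h‖)
        hder (fun x hx => hlip x hx) hconv
        (left_mem_segment ℝ w z₁) (right_mem_segment ℝ w z₁)
      have hre : (fun z : ℂ => g.eval z - g.derivative.eval w * z) z₁
            - (fun z : ℂ => g.eval z - g.derivative.eval w * z) w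
          = g.eval z₁ - g.eval w - g.derivative.eval w * (z₁ - w) := by
        simp only
        ring
      rw [hre] at hbd2
      calc ‖g.eval z₁ - g.eval w - g.derivative.eval w * (z₁ - w)‖
          ≤ M₂ * ‖s • h‖ * ‖z₁ - w‖ := hbd2
        _ = M₂ * ‖s • h‖ ^ 2 := by rw [hzw]; ring
    have halg : g.eval w + g.derivative.eval w * (z₁ - w)
        = g.eval w * (1 - ((s * (c * ψ w) * B ^ 2 : ℝ) : ℂ)) := by
      rw [hzw, hh, Complex.real_smul]
      have hconj : g.derivative.eval w * (starRingEnd ℂ) (g.derivative.eval w)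
          = ((B ^ 2 : ℝ) : ℂ) := by
        rw [Complex.mul_conj]
        congr 1
        rw [Complex.normSq_eq_norm_sq, hBdef]
      have expand : g.eval w + g.derivative.eval w *
            ((s : ℂ) * -(((c * ψ w : ℝ) : ℂ)
              * (g.eval w * (starRingEnd ℂ) (g.derivative.eval w))))
          = g.eval w * (1 - (s : ℂ) * ((c * ψ w : ℝ) : ℂ)
              * (g.derivative.eval w * (starRingEnd ℂ) (g.derivative.eval w))) := by
        ring
      rw [expand, hconj]
      push_cast
      ring
    set lam : ℝ := s * (c * ψ w) * B ^ 2 with hlamdef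
    have hlam0 : 0 ≤ lam := by
      have := hψ0 w
      have := hc0.le
      positivity
    have hlam_half : lam ≤ 1 / 2 := by
      have h1 : lam ≤ c * M₃ ^ 2 := by
        rw [hlamdef]
        have e1 : B ^ 2 ≤ M₃ ^ 2 := pow_le_pow_left₀ hB0 hBM 2
        have e2 : c * ψ w ≤ c := mul_le_of_le_one_right hc0.le (hψ1 w)
        have e3 : s * (c * ψ w) ≤ c * ψ w := mul_le_of_le_one_left hcψ0 hs1
        have e4 : s * (c * ψ w) ≤ c := le_trans e3 e2
        exact mul_le_mul e4 e1 (by positivity) hc0.le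
      have h2 : c * (2 * M₃ ^ 2) ≤ 1 := by
        have := (le_div_iff₀ (by positivity : (0:ℝ) < 2 * M₃ ^ 2)).mp hc1
        linarith
      linarith
    have hmain1 : ‖g.eval w * (1 - ((lam : ℝ) : ℂ))‖ = A * (1 - lam) := by
      rw [norm_mul]
      congr 1
      have hc' : (1 : ℂ) - (lam : ℂ) = ((1 - lam : ℝ) : ℂ) := by push_cast; ring
      rw [hc', Complex.norm_real, Real.norm_eq_abs, abs_of_nonneg (by linarith)]
    have herr : M₂ * ‖s • h‖ ^ 2 ≤ lam * A / 2 := by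
      have hsh2 : ‖s • h‖ ^ 2 = lam * (s * (c * ψ w) * A ^ 2) := by
        rw [hsh, hlamdef]; ring
      have hq1 : s * (c * ψ w) * A ^ 2 ≤ c * T * A := by
        have e2 : c * ψ w ≤ c := mul_le_of_le_one_right hc0.le (hψ1 w)
        have e3 : s * (c * ψ w) ≤ c * ψ w := mul_le_of_le_one_left hcψ0 hs1
        have e4 : s * (c * ψ w) ≤ c := le_trans e3 e2
        have e5 : A ^ 2 ≤ T * A := by nlinarith [hA0, hAT]
        have e6 : 0 ≤ s * (c * ψ w) := by positivity
        calc s * (c * ψ w) * A ^ 2 ≤ c * (T * A) :=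
              mul_le_mul e4 e5 (by positivity) hc0.le
          _ = c * T * A := by ring
      have hq2 : M₂ * (c * T) ≤ 1 / 2 := by
        have h3 : c * (2 * M₂ * T) ≤ 1 := by
          have := (le_div_iff₀ (by positivity : (0:ℝ) < 2 * M₂ * T)).mp hc2
          linarith
        have : M₂ * (c * T) = c * (2 * M₂ * T) / 2 := by ring
        rw [this]; linarith
      calc M₂ * ‖s • h‖ ^ 2 = lam * (M₂ * (s * (c * ψ w) * A ^ 2)) := by rw [hsh2]; ring
        _ ≤ lam * (M₂ * (c * T * A)) := by
            have hmono : M₂ * (s * (c * ψ w) * A ^ 2) ≤ M₂ * (c * T * A) :=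
              mul_le_mul_of_nonneg_left hq1 hM₂0.le
            exact mul_le_mul_of_nonneg_left hmono hlam0
        _ = lam * (M₂ * (c * T)) * A := by ring
        _ ≤ lam * (1 / 2) * A :=
            mul_le_mul_of_nonneg_right (mul_le_mul_of_nonneg_left hq2 hlam0) hA0
        _ = lam * A / 2 := by ring
    have htri : ‖g.eval z₁‖ ≤ ‖g.eval w + g.derivative.eval w * (z₁ - w)‖
        + ‖g.eval z₁ - g.eval w - g.derivative.eval w * (z₁ - w)‖ := by
      have hid : g.eval z₁ = (g.eval w + g.derivative.eval w * (z₁ - w))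
          + (g.eval z₁ - g.eval w - g.derivative.eval w * (z₁ - w)) := by ring
      nth_rewrite 1 [hid]
      exact norm_add_le _ _
    rw [halg, hmain1] at htri
    nlinarith [htri, taylor, herr]
  -- simple consequences
  have key1 : ∀ w : ℂ, ‖g.eval w‖ ≤ T → ∀ s : ℝ, 0 ≤ s → s ≤ 1 →
      ‖g.eval (w + s • (F w - w))‖ ≤ ‖g.eval w‖ := by
    intro w hw s hs0 hs1
    have hk := key w hw s hs0 hs1
    have hpos : 0 ≤ s * (c * ψ w) * ‖g.derivative.eval w‖ ^ 2 * ‖g.eval w‖ / 2 := by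
      have h1 := hψ0 w
      have h2 := hc0.le
      positivity
    linarith
  have keyF : ∀ w : ℂ, ‖g.eval w‖ ≤ T → ‖g.eval (F w)‖ ≤ ‖g.eval w‖ := by
    intro w hw
    have hk := key1 w hw 1 zero_le_one le_rfl
    have hone : w + (1:ℝ) • (F w - w) = F w := by rw [one_smul]; ring
    rwa [hone] at hk
  have keyF2 : ∀ w : ℂ, ‖g.eval w‖ ≤ T → S + 2 ≤ ‖g.eval w‖ →
      ‖g.eval (F w)‖ ≤ ‖g.eval w‖ - μ := by
    intro w hw hw2
    have hψw : ψ w = 1 := by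
      simp only [hψdef]
      rw [min_eq_left (by linarith), max_eq_right (by linarith : (0:ℝ) ≤ 1)]
    have hB : m ≤ ‖g.derivative.eval w‖ := hm w (hρ w hw) (by linarith)
    have hk := key w hw 1 zero_le_one le_rfl
    have hone : w + (1:ℝ) • (F w - w) = F w := by rw [one_smul]; ring
    rw [hone, hψw] at hk
    have hstep : μ ≤ 1 * (c * 1) * ‖g.derivative.eval w‖ ^ 2 * ‖g.eval w‖ / 2 := by
      rw [hμdef]
      have hB2 : m ^ 2 ≤ ‖g.derivative.eval w‖ ^ 2 := pow_le_pow_left₀ hm0.le hB 2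
      have e0 : c * m ^ 2 ≤ c * ‖g.derivative.eval w‖ ^ 2 :=
        mul_le_mul_of_nonneg_left hB2 hc0.le
      have e1 : (S + 2) * (c * m ^ 2) ≤ ‖g.eval w‖ * (c * ‖g.derivative.eval w‖ ^ 2) :=
        mul_le_mul hw2 e0 (by positivity) (norm_nonneg _)
      nlinarith [e1]
    linarith
  -- iterates only decrease
  have iter1 : ∀ w : ℂ, ‖g.eval w‖ ≤ T → ∀ n : ℕ, ‖g.eval (F^[n] w)‖ ≤ ‖g.eval w‖ := by
    intro w hw n
    induction n with
    | zero => simp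
    | succ n ih =>
      rw [Function.iterate_succ_apply']
      exact le_trans (keyF _ (le_trans ih hw)) ih
  set N : ℕ := ⌈T / μ⌉₊ + 1 with hNdef
  have iter2 : ∀ w : ℂ, ‖g.eval w‖ ≤ T → ‖g.eval (F^[N] w)‖ ≤ S + 2 := by
    intro w hw
    have main : ∀ n : ℕ, ‖g.eval (F^[n] w)‖ ≤ max (S + 2) (T - n * μ) := by
      intro n
      induction n with
      | zero =>
        simp only [Function.iterate_zero_apply, Nat.cast_zero, zero_mul, sub_zero]
        exact le_trans hw (le_max_right _ _)
      | succ n ih =>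
        have hvT : ‖g.eval (F^[n] w)‖ ≤ T := le_trans (iter1 w hw n) hw
        rw [Function.iterate_succ_apply']
        by_cases hcase : ‖g.eval (F^[n] w)‖ ≤ S + 2
        · exact le_trans (le_trans (keyF _ hvT) hcase) (le_max_left _ _)
        · push_neg at hcase
          have hd2 := keyF2 _ hvT hcase.le
          rcases le_max_iff.mp ih with hmx | hmx
          · linarith
          · apply le_max_of_le_right
            push_cast
            linarith
    have hNbig : T - N * μ ≤ 0 := by
      have h1 : T / μ ≤ (⌈T / μ⌉₊ : ℝ) := Nat.le_ceil _
      have h2 : T ≤ (⌈T / μ⌉₊ : ℝ) * μ := by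
        rw [div_le_iff₀ hμ0] at h1; linarith
      have h3 : (N : ℝ) = (⌈T / μ⌉₊ : ℝ) + 1 := by rw [hNdef]; push_cast; ring
      nlinarith
    rcases le_max_iff.mp (main N) with hmx | hmx
    · exact hmx
    · have := norm_nonneg (g.eval (F^[N] w))
      linarith
  -- polygonal descent path from a
  have polygon : ∀ n : ℕ, ∃ Q : Set ℂ, IsPreconnected Q ∧ a ∈ Q ∧ F^[n] a ∈ Q ∧
      ∀ z ∈ Q, ‖g.eval z‖ ≤ ‖g.eval a‖ := by
    intro n
    induction n with
    | zero =>
      refine ⟨{a}, isPreconnected_singleton, rfl, by simp, fun z hz => ?_⟩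
      rw [Set.mem_singleton_iff] at hz
      rw [hz]
    | succ n ih =>
      obtain ⟨Q, hQ, haQ, hnQ, hQb⟩ := ih
      have hwa : ‖g.eval (F^[n] a)‖ ≤ ‖g.eval a‖ := iter1 a haT n
      have hwT : ‖g.eval (F^[n] a)‖ ≤ T := le_trans hwa haT
      refine ⟨Q ∪ segment ℝ (F^[n] a) (F (F^[n] a)), ?_, Or.inl haQ, ?_, ?_⟩
      · exact IsPreconnected.union (F^[n] a) hnQ (left_mem_segment ℝ _ _) hQ
          (convex_segment _ _).isPreconnected
      · rw [Function.iterate_succ_apply']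
        exact Or.inr (right_mem_segment ℝ _ _)
      · rintro z (hz | hz)
        · exact hQb z hz
        · rw [segment_eq_image'] at hz
          obtain ⟨t, ht, rfl⟩ := hz
          exact le_trans (key1 (F^[n] a) hwT t ht.1 ht.2) hwa
  obtain ⟨Q, hQ, haQ, hNQ, hQb⟩ := polygon N
  have hFb : F b = b := by
    have hgb : ‖g.eval b‖ = 0 := by rw [hb, norm_zero]
    have hψb : ψ b = 0 := by
      simp only [hψdef, hgb]
      rw [min_eq_right (by linarith), max_eq_left (by linarith)]
    simp only [hFdef, hψb, mul_zero, Complex.ofReal_zero, zero_mul, sub_zero]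
  refine ⟨Q ∪ (F^[N] '' segment ℝ a b), ?_, Or.inl haQ, ?_, ?_⟩
  · apply IsPreconnected.union (F^[N] a) hNQ
      ((Set.mem_image _ _ _).mpr ⟨a, left_mem_segment ℝ a b, rfl⟩) hQ
    exact ((convex_segment a b).isPreconnected).image _ ((hFcont.iterate N).continuousOn)
  · exact Or.inr ((Set.mem_image _ _ _).mpr
      ⟨b, right_mem_segment ℝ a b, Function.iterate_fixed hFb N⟩)
  · rintro z (hz | ⟨y, hy, rfl⟩)
    · exact le_trans (hQb z hz) (le_max_left _ _)
    · exact le_trans (iter2 y (hseg_le y hy)) (le_max_right _ _)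

end Stmt19aux

open Stmt19aux in
theorem stmt19 :
    ∃ Rstar : ℝ, 0 < Rstar ∧
      ∀ d : ℕ, 2 ≤ d → ∀ g : Polynomial ℂ,
        g.Monic → g.natDegree = d → g.coeff (d - 1) = 0 →
        (∀ z : ℂ, (Polynomial.derivative g).eval z = 0 →
          ‖g.eval z‖ ≤ Rstar) →
        ∀ z : ℂ, ‖g.eval z‖ < 2 * Rstar → ‖z‖ < Rstar := by
  refine ⟨1000000, by norm_num, ?_⟩
  intro d hd g hmon hdeg hcoeff hcrit z hz
  have hcrit' : ∀ w : ℂ, g.derivative.eval w = 0 → ‖g.eval w‖ ≤ (1000000:ℝ) := by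
    intro w hw
    exact hcrit w hw
  have hg0 : g ≠ 0 := hmon.ne_zero
  have hsplits : g.Splits := IsAlgClosed.splits g
  have hcard : Multiset.card g.roots = d := by
    have h := (Polynomial.splits_iff_card_roots).mp hsplits
    rw [hdeg] at h
    exact h
  have hdeg1 : 1 ≤ g.natDegree := by omega
  have hsum : g.roots.sum = 0 := by
    have h1 := hsplits.nextCoeff_eq_neg_sum_roots_of_monic hmon
    have h2 : g.nextCoeff = 0 := by
      rw [Polynomial.nextCoeff_of_natDegree_pos (by omega), hdeg]
      exact hcoeff
    rw [h2] at h1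
    exact neg_eq_zero.mp h1.symm
  have hprodeval : ∀ w : ℂ, g.eval w = (g.roots.map (fun ζ => w - ζ)).prod := by
    intro w
    conv_lhs => rw [hsplits.eq_prod_roots_of_monic hmon]
    rw [Polynomial.eval_multiset_prod, Multiset.map_map]
    apply congrArg
    apply Multiset.map_congr rfl
    intro x _
    simp
  -- bound distance from z to each root
  have hroot_bound : ∀ ζ ∈ g.roots, ‖z - ζ‖ ≤ 11320 := by
    intro ζ hζ
    obtain ⟨P, hP, hzP, hζP, hPb⟩ := connect hdeg1 (by norm_num : (1:ℝ) ≤ 1000000) hcrit' z ζ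
      (Polynomial.isRoot_of_mem_roots hζ)
    by_contra hLgt
    push_neg at hLgt
    set L : ℝ := ‖z - ζ‖ with hLdef
    have hL0 : 0 < L := by linarith
    set u : ℂ := (z - ζ) / (L : ℂ) with hudef
    have hLne : (L : ℂ) ≠ 0 := Complex.ofReal_ne_zero.mpr (ne_of_gt hL0)
    have hzζ : z - ζ = (L : ℂ) * u := by
      rw [hudef]
      field_simp
    have hnu : ‖u‖ = 1 := by
      rw [hudef, norm_div, Complex.norm_real, Real.norm_eq_abs, abs_of_pos hL0, ← hLdef]
      exact div_self (ne_of_gt hL0)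
    set proj : ℂ → ℝ := fun w => (w * (starRingEnd ℂ) u).re with hprojdef
    have hprojcont : Continuous proj :=
      Complex.continuous_re.comp (continuous_mul_right _)
    have huu : u * (starRingEnd ℂ) u = 1 := by
      rw [Complex.mul_conj]
      rw [Complex.normSq_eq_norm_sq, hnu]
      norm_num
    have hprojdiff : proj z - proj ζ = L := by
      have h1 : proj z - proj ζ = ((z - ζ) * (starRingEnd ℂ) u).re := by
        simp only [hprojdef]
        rw [← Complex.sub_re, ← sub_mul]
      rw [h1, hzζ, mul_assoc, huu, mul_one, Complex.ofReal_re]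
    set q : Polynomial ℝ := (g.roots.map (fun ζ' : ℂ =>
      Polynomial.X - Polynomial.C ((ζ' * (starRingEnd ℂ) u).re))).prod with hqdef
    have hqm : q.Monic := Polynomial.monic_multiset_prod_of_monic _ _
      (fun i _ => Polynomial.monic_X_sub_C _)
    have hqdeg : q.natDegree = d := by
      rw [hqdef, Polynomial.natDegree_multiset_prod_of_monic _ ?_]
      · rw [Multiset.map_map]
        have hmc : Multiset.map (Polynomial.natDegree ∘ fun ζ' : ℂ =>
              Polynomial.X - Polynomial.C ((ζ' * (starRingEnd ℂ) u).re)) g.roots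
            = Multiset.map (fun _ : ℂ => 1) g.roots := by
          apply Multiset.map_congr rfl
          intro x _
          exact Polynomial.natDegree_X_sub_C _
        rw [hmc, Multiset.map_const', Multiset.sum_replicate, hcard, smul_eq_mul, mul_one]
      · intro f hf
        obtain ⟨i, _, rfl⟩ := Multiset.mem_map.mp hf
        exact Polynomial.monic_X_sub_C _
    obtain ⟨x, hxI, hxq⟩ := cheb (by omega : 1 ≤ d) q hqm hqdeg (proj ζ) L hL0
    have hxI' : x ∈ Set.Icc (proj ζ) (proj z) := by
      rw [show proj z = proj ζ + L by linarith [hprojdiff]]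
      exact hxI
    obtain ⟨w, hwP, hwx⟩ := hP.intermediate_value hζP hzP hprojcont.continuousOn hxI'
    have hq_le : |q.eval x| ≤ ‖g.eval w‖ := by
      rw [hprodeval w, hqdef, Polynomial.eval_multiset_prod, Multiset.map_map,
        norm_multiset_prod_c, Multiset.map_map, abs_multiset_prod_r, Multiset.map_map]
      apply multiset_prod_map_le
      · intro i _
        simp only [Function.comp_apply]
        positivity
      · intro i _
        simp only [Function.comp_apply, Polynomial.eval_sub, Polynomial.eval_X,
          Polynomial.eval_C]
        have hxw : x - (i * (starRingEnd ℂ) u).re = ((w - i) * (starRingEnd ℂ) u).re := by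
          rw [← hwx]
          simp only [hprojdef]
          rw [← Complex.sub_re, ← sub_mul]
        rw [hxw]
        calc |((w - i) * (starRingEnd ℂ) u).re| ≤ ‖(w - i) * (starRingEnd ℂ) u‖ := by
              exact Complex.abs_re_le_norm _
          _ = ‖w - i‖ := by rw [norm_mul, RCLike.norm_conj, hnu, mul_one]
    have hPw := hPb w hwP
    have hwlt : ‖g.eval w‖ < 2000000 := by
      rcases le_max_iff.mp hPw with hcase | hcase
      · calc ‖g.eval w‖ ≤ ‖g.eval z‖ := hcase
          _ < 2 * 1000000 := hz
          _ = 2000000 := by norm_num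
      · linarith
    have hbig : (2000000:ℝ) ≤ (L / 8) ^ d := by
      have h8 : (1415:ℝ) ≤ L / 8 := by linarith
      calc (2000000:ℝ) ≤ 1415 ^ 2 := by norm_num
        _ ≤ (1415:ℝ) ^ d := pow_le_pow_right₀ (by norm_num) hd
        _ ≤ (L / 8) ^ d := pow_le_pow_left₀ (by norm_num) h8 d
    linarith [hxq, hq_le]
  -- conclude
  have hdz : ((Multiset.card g.roots : ℕ) : ℂ) * z = (g.roots.map (fun ζ => z - ζ)).sum := by
    rw [multiset_sum_sub, hsum, sub_zero]
  have hnorm : (d:ℝ) * ‖z‖ ≤ (d:ℝ) * 11320 := by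
    have h1 : ‖((d:ℕ) : ℂ) * z‖ = (d:ℝ) * ‖z‖ := by
      rw [norm_mul, Complex.norm_natCast]
    have h2 : ‖(g.roots.map (fun ζ => z - ζ)).sum‖
        ≤ ((g.roots.map (fun ζ => z - ζ)).map (fun x : ℂ => ‖x‖)).sum :=
      norm_multiset_sum_le _
    rw [Multiset.map_map] at h2
    have h3 : ((g.roots.map ((fun x : ℂ => ‖x‖) ∘ fun ζ => z - ζ))).sum
        ≤ (g.roots.map (fun _ : ℂ => (11320:ℝ))).sum := by
      apply Multiset.sum_map_le_sum_map
      intro i hi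
      exact hroot_bound i hi
    rw [Multiset.map_const', Multiset.sum_replicate, hcard, nsmul_eq_mul] at h3
    rw [hcard] at hdz
    calc (d:ℝ) * ‖z‖ = ‖((d:ℕ) : ℂ) * z‖ := h1.symm
      _ = ‖(g.roots.map (fun ζ => z - ζ)).sum‖ := by rw [hdz]
      _ ≤ (d:ℝ) * 11320 := le_trans h2 h3
  have hd0 : (0:ℝ) < d := by
    have : 0 < d := by omega
    exact_mod_cast this
  have hfin : ‖z‖ ≤ 11320 := le_of_mul_le_mul_left hnorm hd0
  linarith
end
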